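/- arXiv:math/0304163 — 6 statements merged into one kernel-verified Lean document; each statement's English description precedes it below -/
import Mathlib

section
/- For every real number μ ≥ 2, the subgroup Γ_μ of SL(2, ℝ) generated by γ₁(μ) and γ₂(μ) is a free group of rank 2 freely generated by γ₁(μ) and γ₂(μ); that is, the canonical homomorphism from the free group on two generators to SL(2, ℝ) sending the generators to γ₁(μ) and γ₂(μ) is injective. -/
open Matrix
open scoped MatrixGroups Pointwise

/-- The parabolic matrix `γ₁(μ) = !![1, μ; 0, 1]` in `SL(2, ℝ)`. -/
def gamma1 (μ : ℝ) : SL(2, ℝ) :=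
  ⟨!![1, μ; 0, 1], by norm_num [Matrix.det_fin_two_of]⟩

/-- The parabolic matrix `γ₂(μ) = !![1, 0; -μ, 1]` in `SL(2, ℝ)`. -/
def gamma2 (μ : ℝ) : SL(2, ℝ) :=
  ⟨!![1, 0; -μ, 1], by norm_num [Matrix.det_fin_two_of]⟩

/-- `Γ_μ`, the subgroup of `SL(2, ℝ)` generated by `γ₁(μ)` and `γ₂(μ)`. -/
def Gamma (μ : ℝ) : Subgroup (Matrix.SpecialLinearGroup (Fin 2) ℝ) :=
  Subgroup.closure {gamma1 μ, gamma2 μ}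

def PPV : Type := {v : Fin 2 → ℝ // v ≠ 0}

lemma PPV.aux (g : SL(2, ℝ)) (v : PPV) : (g : Matrix (Fin 2) (Fin 2) ℝ) *ᵥ v.1 ≠ 0 := by
  intro h
  apply v.2
  have h2 := congrArg (fun w => ((g⁻¹ : SL(2, ℝ)) : Matrix (Fin 2) (Fin 2) ℝ) *ᵥ w) h
  simp only [Matrix.mulVec_mulVec, Matrix.mulVec_zero] at h2
  rw [← Matrix.SpecialLinearGroup.coe_mul, inv_mul_cancel] at h2
  simpa using h2

instance : MulAction SL(2, ℝ) PPV where
  smul g v := ⟨(g : Matrix (Fin 2) (Fin 2) ℝ) *ᵥ v.1, PPV.aux g v⟩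
  one_smul v := by
    apply Subtype.ext
    show ((1 : SL(2, ℝ)) : Matrix (Fin 2) (Fin 2) ℝ) *ᵥ v.1 = v.1
    simp
  mul_smul g h v := by
    apply Subtype.ext
    show ((g * h : SL(2, ℝ)) : Matrix (Fin 2) (Fin 2) ℝ) *ᵥ v.1 = _
    rw [Matrix.SpecialLinearGroup.coe_mul, ← Matrix.mulVec_mulVec]; rfl

lemma PPV.smul_coe (g : SL(2, ℝ)) (v : PPV) :
    (g • v).1 = (g : Matrix (Fin 2) (Fin 2) ℝ) *ᵥ v.1 := rfl

lemma gamma1_inv (μ : ℝ) : (gamma1 μ)⁻¹ = gamma1 (-μ) := by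
  apply inv_eq_of_mul_eq_one_right
  ext i j
  rw [Matrix.SpecialLinearGroup.coe_mul]
  fin_cases i <;> fin_cases j <;>
    simp [gamma1, Matrix.SpecialLinearGroup.coe_mul, Matrix.mul_apply, Fin.sum_univ_two]

lemma gamma2_inv (μ : ℝ) : (gamma2 μ)⁻¹ = gamma2 (-μ) := by
  apply inv_eq_of_mul_eq_one_right
  ext i j
  rw [Matrix.SpecialLinearGroup.coe_mul]
  fin_cases i <;> fin_cases j <;>
    simp [gamma2, Matrix.SpecialLinearGroup.coe_mul, Matrix.mul_apply, Fin.sum_univ_two]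

lemma g1_smul0 (μ : ℝ) (v : PPV) : (gamma1 μ • v).1 0 = v.1 0 + μ * v.1 1 := by
  rw [PPV.smul_coe]
  simp [gamma1, Matrix.mulVec, dotProduct, Fin.sum_univ_two, Matrix.vecHead, Matrix.vecTail]

lemma g1_smul1 (μ : ℝ) (v : PPV) : (gamma1 μ • v).1 1 = v.1 1 := by
  rw [PPV.smul_coe]
  simp [gamma1, Matrix.mulVec, dotProduct, Fin.sum_univ_two, Matrix.vecHead, Matrix.vecTail]

lemma g2_smul0 (μ : ℝ) (v : PPV) : (gamma2 μ • v).1 0 = v.1 0 := by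
  rw [PPV.smul_coe]
  simp [gamma2, Matrix.mulVec, dotProduct, Fin.sum_univ_two, Matrix.vecHead, Matrix.vecTail]

lemma g2_smul1 (μ : ℝ) (v : PPV) : (gamma2 μ • v).1 1 = -μ * v.1 0 + v.1 1 := by
  rw [PPV.smul_coe]
  simp [gamma2, Matrix.mulVec, dotProduct, Fin.sum_univ_two, Matrix.vecHead, Matrix.vecTail]

/-- The ping-pong sets. -/
def PX (i : Fin 2) : Set PPV :=
  if i = 0 then {v | v.1 1 ≠ 0 ∧ 1 ≤ v.1 0 / v.1 1}
  else {v | v.1 0 ≠ 0 ∧ v.1 1 / v.1 0 ≤ -1}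

def PY (i : Fin 2) : Set PPV :=
  if i = 0 then {v | v.1 1 = 0 ∨ v.1 0 / v.1 1 < -1}
  else {v | v.1 0 = 0 ∨ 1 < v.1 1 / v.1 0}

-- real-number disjointness facts
lemma rinv (x y : ℝ) : y / x = 1 / (x / y) := by rw [one_div_div]

lemma dXX {x y : ℝ} (h2 : 1 ≤ x / y) (h4 : y / x ≤ -1) : False := by
  have h5 : 0 < x / y := lt_of_lt_of_le one_pos h2
  have h6 : 0 < y / x := by rw [rinv]; positivity
  linarith

lemma dYY {x y : ℝ} (hv : ¬(x = 0 ∧ y = 0)) (h1 : y = 0 ∨ x / y < -1)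
    (h3 : x = 0 ∨ 1 < y / x) : False := by
  rcases h1 with h1 | h1 <;> rcases h3 with h3 | h3
  · exact hv ⟨h3, h1⟩
  · rw [h1] at h3; simp at h3; linarith
  · rw [h3] at h1; simp at h1; linarith
  · have h5 : y / x < 0 := by
      rw [rinv]
      exact one_div_neg.mpr (by linarith)
    linarith

lemma dX0Y1 {x y : ℝ} (h1 : y ≠ 0) (h2 : 1 ≤ x / y) (h3 : x = 0 ∨ 1 < y / x) : False := by
  rcases h3 with h3 | h3
  · rw [h3] at h2; simp at h2; linarith
  · have h5 : y / x ≤ 1 := by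
      rw [rinv, div_le_one (by linarith)]
      linarith
    linarith

lemma dX1Y0 {x y : ℝ} (h1 : x ≠ 0) (h2 : y / x ≤ -1) (h3 : y = 0 ∨ x / y < -1) : False := by
  rcases h3 with h3 | h3
  · rw [h3] at h2; simp at h2; linarith
  · have h5 : -1 ≤ x / y := by
      rw [rinv y x, le_div_iff_of_neg (by linarith : y / x < 0)]
      linarith
    linarith

/-- For `μ ≥ 2`, the canonical homomorphism from the free group on two generators to
`SL(2, ℝ)` sending the generators to `γ₁(μ)` and `γ₂(μ)` is injective, and its range is
`Γ_μ`; that is, `Γ_μ` is a free group of rank 2 freely generated by `γ₁(μ)` and `γ₂(μ)`. -/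
theorem stmt0 (μ : ℝ) (hμ : 2 ≤ μ) :
    Function.Injective
      (FreeGroup.lift (fun i : Fin 2 => if i = 0 then gamma1 μ else gamma2 μ) :
        FreeGroup (Fin 2) →* SL(2, ℝ)) ∧
    (FreeGroup.lift (fun i : Fin 2 => if i = 0 then gamma1 μ else gamma2 μ) :
        FreeGroup (Fin 2) →* SL(2, ℝ)).range = Gamma μ := by
  have hμ0 : μ ≠ 0 := by positivity
  constructor
  · apply FreeGroup.injective_lift_of_ping_pong _ PX PY
    · -- nonempty
      intro i
      fin_cases i
      · refine ⟨⟨![1, 1], ?_⟩, ?_⟩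
        · simp [funext_iff, Fin.forall_fin_two]
        · simp [PX]
          exact ⟨by simp, by norm_num⟩
      · refine ⟨⟨![1, -1], ?_⟩, ?_⟩
        · simp [funext_iff, Fin.forall_fin_two]
        · simp [PX]
          exact ⟨by simp, by norm_num⟩
    · -- X pairwise disjoint
      intro i j hij
      have key : Disjoint (PX 0) (PX 1) := by
        rw [Set.disjoint_left]
        rintro v ⟨h1, h2⟩ ⟨h3, h4⟩
        exact dXX h2 h4
      fin_cases i <;> fin_cases j <;> first | exact absurd rfl hij | exact key | exact key.symm
    · -- Y pairwise disjoint
      intro i j hij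
      have key : Disjoint (PY 0) (PY 1) := by
        rw [Set.disjoint_left]
        rintro v h1 h3
        simp only [PY, reduceIte, Set.mem_setOf_eq] at h1 h3
        refine dYY (fun h => v.2 ?_) h1 h3
        funext k
        fin_cases k <;> simp [h.1, h.2]
      fin_cases i <;> fin_cases j <;> first | exact absurd rfl hij | exact key | exact key.symm
    · -- X i disjoint from Y j
      intro i j
      fin_cases i <;> fin_cases j <;> rw [Set.disjoint_left] <;> rintro v hX hY <;>
        simp only [PX, PY, reduceIte, Set.mem_setOf_eq, one_ne_zero, Fin.isValue] at hX hY
      · rcases hY with h | h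
        · exact hX.1 h
        · linarith [hX.2]
      · exact dX0Y1 hX.1 hX.2 hY
      · exact dX1Y0 hX.1 hX.2 hY
      · rcases hY with h | h
        · exact hX.1 h
        · linarith [hX.2]
    · -- hX : a i • (Y i)ᶜ ⊆ X i
      intro i
      fin_cases i <;> intro w hw <;> rw [Set.mem_smul_set] at hw <;> obtain ⟨v, hv, rfl⟩ := hw <;>
        simp only [Set.mem_compl_iff, PX, PY, Set.mem_setOf_eq, reduceIte, not_or, not_lt,
          Fin.isValue, Fin.zero_eta, Fin.mk_one, one_ne_zero, if_true, if_false] at hv ⊢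
      · -- gamma1 case
        obtain ⟨h1, h2⟩ := hv
        rw [g1_smul0, g1_smul1]
        refine ⟨h1, ?_⟩
        rw [add_div, mul_div_assoc, div_self h1]
        linarith
      · -- gamma2 case
        obtain ⟨h1, h2⟩ := hv
        rw [g2_smul0, g2_smul1]
        refine ⟨h1, ?_⟩
        rw [add_div, mul_div_assoc, div_self h1]
        linarith
    · -- hY : a⁻¹ i • (X i)ᶜ ⊆ Y i
      intro i
      fin_cases i <;> intro w hw <;> rw [Pi.inv_apply, Set.mem_smul_set] at hw <;>
        obtain ⟨v, hv, rfl⟩ := hw <;>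
        simp only [Set.mem_compl_iff, PX, PY, Set.mem_setOf_eq, reduceIte, not_and, not_le,
          Fin.isValue, Fin.zero_eta, Fin.mk_one, one_ne_zero, if_true, if_false] at hv ⊢
      · -- gamma1 inverse case
        rw [gamma1_inv, g1_smul0, g1_smul1]
        by_cases h1 : v.1 1 = 0
        · exact Or.inl h1
        · right
          have h2 := hv h1
          rw [add_div, mul_div_assoc, div_self h1]
          linarith
      · -- gamma2 inverse case
        rw [gamma2_inv, g2_smul0, g2_smul1]
        by_cases h1 : v.1 0 = 0
        · exact Or.inl h1
        · right
          have h2 := hv h1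
          rw [add_div, mul_div_assoc, div_self h1]
          linarith
  · rw [FreeGroup.range_lift_eq_closure]
    unfold Gamma
    congr 1
    ext g
    simp only [Set.mem_range, Set.mem_insert_iff, Set.mem_singleton_iff]
    constructor
    · rintro ⟨i, rfl⟩
      fin_cases i <;> simp
    · rintro (rfl | rfl)
      · exact ⟨0, by simp⟩
      · exact ⟨1, by simp⟩
end

section
/- Let 0 < μ < 2 and suppose the image of Γ_μ in PSL(2, ℝ) is a discrete subgroup. Then the image of γ₁(μ)·γ₂(μ) in PSL(2, ℝ) has finite order; in particular Γ_μ is not a free group of rank 2 on γ₁(μ) and γ₂(μ). -/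
open Matrix
open scoped MatrixGroups

/-- The topology on `SL(2, ℝ)` as a subspace of the (topological) space of matrices. -/
instance : TopologicalSpace SL(2, ℝ) :=
  inferInstanceAs (TopologicalSpace { A : Matrix (Fin 2) (Fin 2) ℝ // A.det = 1 })

/-- The quotient map `SL(2, ℝ) → PSL(2, ℝ) = SL(2, ℝ)/{±I}` (quotient by the center). -/
noncomputable def toPSL : SL(2, ℝ) →* PSL(2, ℝ) :=
  QuotientGroup.mk' (Subgroup.center (Matrix.SpecialLinearGroup (Fin 2) ℝ))

open scoped Real

/-- Chebyshev-type closed formula for powers of a matrix satisfying the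
Cayley–Hamilton relation with trace `2 cos θ`. -/
lemma pow_formula_aux (G : Matrix (Fin 2) (Fin 2) ℝ) (θ : ℝ) (hθ : Real.sin θ ≠ 0)
    (hG : G * G = (2 * Real.cos θ) • G - 1) (n : ℕ) :
    G ^ n = (Real.sin (n * θ) / Real.sin θ) • G
      - (Real.sin (((n : ℝ) - 1) * θ) / Real.sin θ) • (1 : Matrix (Fin 2) (Fin 2) ℝ) := by
  induction n with
  | zero =>
    simp only [Nat.cast_zero, pow_zero, zero_mul, Real.sin_zero, zero_div, zero_smul, zero_sub]
    rw [neg_mul, Real.sin_neg, one_mul]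
    field_simp
    simp
  | succ n ih =>
    have key : Real.sin ((n + 1 : ℝ) * θ)
        = (2 * Real.cos θ) * Real.sin (n * θ) - Real.sin (((n : ℝ) - 1) * θ) := by
      have h1 : ((n : ℝ) + 1) * θ = n * θ + θ := by ring
      have h2 : ((n : ℝ) - 1) * θ = n * θ - θ := by ring
      rw [h1, h2, Real.sin_add, Real.sin_sub]; ring
    set a := Real.sin (n * θ) / Real.sin θ with ha
    set b := Real.sin (((n : ℝ) - 1) * θ) / Real.sin θ with hb
    have : G ^ (n + 1) = (a * (2 * Real.cos θ) - b) • G - a • 1 := by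
      rw [pow_succ, ih, sub_mul, smul_mul_assoc, smul_mul_assoc, one_mul, hG]
      module
    rw [this]
    push_cast
    congr 1
    · congr 1
      rw [key, ha, hb]
      field_simp
    · congr 1
      rw [ha]
      norm_num

/-- Dirichlet approximation: multiples of `θ` come arbitrarily close to multiples of `π`. -/
lemma sin_small_aux (θ : ℝ) (N : ℕ) : ∃ k : ℕ, 0 < k ∧ |Real.sin (k * θ)| ≤ π / (N + 1) := by
  obtain ⟨j, k, hk0, _, h⟩ := Real.exists_int_int_abs_mul_sub_le (θ / π) (n := N + 1) (by omega)
  refine ⟨k.toNat, by omega, ?_⟩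
  have hπ : (0:ℝ) < π := Real.pi_pos
  have hkt : ((k.toNat : ℕ) : ℝ) = (k : ℝ) := by
    exact_mod_cast congrArg (Int.cast : ℤ → ℝ) (Int.toNat_of_nonneg hk0.le)
  have hx : (k.toNat : ℝ) * θ = ((k.toNat : ℝ) * θ - j * π) + j * π := by ring
  have habs : |((-1:ℝ)) ^ j| = 1 := by
    rcases Int.even_or_odd j with hj | hj
    · rw [hj.neg_one_zpow, abs_one]
    · rw [hj.neg_one_zpow, abs_neg, abs_one]
  rw [hx, Real.sin_add_int_mul_pi, abs_mul, habs, one_mul]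
  have h1 : |(k.toNat : ℝ) * θ - j * π| = π * |(k:ℝ) * (θ/π) - j| := by
    have he : (k.toNat : ℝ) * θ - j * π = π * ((k:ℝ) * (θ/π) - j) := by
      rw [hkt]; field_simp
    rw [he, abs_mul, abs_of_pos hπ]
  calc |Real.sin ((k.toNat:ℝ) * θ - j * π)| ≤ |(k.toNat : ℝ) * θ - j * π| :=
        Real.abs_sin_le_abs
    _ = π * |(k:ℝ) * (θ/π) - j| := h1
    _ ≤ π * (1 / (N + 1 + 1)) := by
        apply mul_le_mul_of_nonneg_left _ hπ.le
        exact_mod_cast h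
    _ ≤ π / (N + 1) := by
        rw [mul_one_div]
        apply div_le_div_of_nonneg_left hπ.le (by positivity)
        linarith

/-- Let `0 < μ < 2` and suppose the image of `Γ_μ` in `PSL(2, ℝ)` is a discrete subgroup.
Then the image of `γ₁(μ)·γ₂(μ)` in `PSL(2, ℝ)` has finite order; in particular `Γ_μ` is
not a free group of rank 2 on `γ₁(μ)` and `γ₂(μ)`. -/
theorem stmt2 (μ : ℝ) (h0 : 0 < μ) (h2 : μ < 2)
    (hdisc : DiscreteTopology ((Gamma μ).map toPSL)) :
    (∃ n : ℕ, 0 < n ∧ (toPSL (gamma1 μ * gamma2 μ)) ^ n = 1) ∧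
    ¬ Function.Injective
      (FreeGroup.lift (fun i : Fin 2 => if i = 0 then gamma1 μ else gamma2 μ) :
        FreeGroup (Fin 2) →* SL(2, ℝ)) := by
  set g := gamma1 μ * gamma2 μ with hg
  -- the matrix of g
  set G : Matrix (Fin 2) (Fin 2) ℝ := !![1 - μ^2, μ; -μ, 1] with hGdef
  have hgval : ((g : SL(2,ℝ)) : Matrix (Fin 2) (Fin 2) ℝ) = G := by
    rw [hg, Matrix.SpecialLinearGroup.coe_mul]
    show ((gamma1 μ : Matrix (Fin 2) (Fin 2) ℝ) * (gamma2 μ : Matrix (Fin 2) (Fin 2) ℝ)) = _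
    rw [gamma1, gamma2]
    simp only []
    rw [Matrix.mul_fin_two, hGdef]
    norm_num
    ring_nf
  -- the rotation angle
  set c : ℝ := (2 - μ^2)/2 with hcdef
  have hc1 : -1 < c := by rw [hcdef]; nlinarith
  have hc2 : c < 1 := by rw [hcdef]; nlinarith
  set θ : ℝ := Real.arccos c with hθdef
  have hcos : Real.cos θ = c := Real.cos_arccos hc1.le hc2.le
  have hsin : 0 < Real.sin θ := by
    rw [hθdef, Real.sin_arccos]
    apply Real.sqrt_pos.mpr
    nlinarith
  -- the Cayley–Hamilton relation
  have hG2 : G * G = (2 * Real.cos θ) • G - 1 := by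
    rw [hcos, hcdef, hGdef, Matrix.mul_fin_two, Matrix.one_fin_two, Matrix.smul_of]
    ext i j
    fin_cases i <;> fin_cases j <;> simp <;> ring
  have hpow : ∀ n : ℕ, ((g ^ n : SL(2,ℝ)) : Matrix (Fin 2) (Fin 2) ℝ)
      = (Real.sin (n * θ) / Real.sin θ) • G
        - (Real.sin (((n : ℝ) - 1) * θ) / Real.sin θ) • 1 := by
    intro n
    rw [Matrix.SpecialLinearGroup.coe_pow, hgval]
    exact pow_formula_aux G θ hsin.ne' hG2 n
  -- extract an isolating open set from discreteness
  obtain ⟨U, hUopen, h1U, hU'⟩ : ∃ U : Set PSL(2,ℝ), IsOpen U ∧ (1:PSL(2,ℝ)) ∈ U ∧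
      ∀ x ∈ (Gamma μ).map toPSL, x ∈ U → x = 1 := by
    have h1 : IsOpen ({1} : Set ((Gamma μ).map toPSL)) := isOpen_discrete _
    rw [isOpen_induced_iff] at h1
    obtain ⟨U, hUo, hU⟩ := h1
    refine ⟨U, hUo, ?_, ?_⟩
    · have : ((1 : ((Gamma μ).map toPSL))) ∈ (Subtype.val ⁻¹' U : Set ((Gamma μ).map toPSL)) := by
        rw [hU]; rfl
      exact this
    · intro x hx hxU
      have : (⟨x, hx⟩ : ((Gamma μ).map toPSL)) ∈
          (Subtype.val ⁻¹' U : Set ((Gamma μ).map toPSL)) := hxU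
      rw [hU] at this
      exact Subtype.ext_iff.mp this
  -- choose a sequence of exponents with sin (k θ) → 0
  have hchoose : ∀ N : ℕ, ∃ k : ℕ, 0 < k ∧ |Real.sin (k * θ)| ≤ π / (N + 1) :=
    fun N => sin_small_aux θ N
  choose k hk0 hks using hchoose
  have hπ : (0:ℝ) < π := Real.pi_pos
  have hs0 : Filter.Tendsto (fun j => Real.sin (k j * θ)) Filter.atTop (nhds 0) := by
    apply squeeze_zero_norm (fun j => by simpa using hks j)
    have h1 := tendsto_one_div_add_atTop_nhds_zero_nat.const_mul π
    simpa [div_eq_mul_inv] using h1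
  -- the doubled exponents
  set m : ℕ → ℕ := fun j => 2 * k j with hm
  have hmθ : ∀ j, ((m j : ℕ) : ℝ) * θ = 2 * ((k j : ℝ) * θ) := by
    intro j; rw [hm]; push_cast; ring
  set A : ℕ → ℝ := fun j => Real.sin (m j * θ) / Real.sin θ with hA
  have hAlim : Filter.Tendsto A Filter.atTop (nhds 0) := by
    apply squeeze_zero_norm (a := fun j => (2 / Real.sin θ) * |Real.sin (k j * θ)|)
    · intro j
      rw [hA]
      simp only [Real.norm_eq_abs]
      rw [hmθ j, Real.sin_two_mul, abs_div, abs_of_pos hsin, div_le_iff₀ hsin, abs_mul, abs_mul]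
      have hc' : |Real.cos ((k j : ℝ) * θ)| ≤ 1 := Real.abs_cos_le_one _
      have h1 : |(2:ℝ)| = 2 := by norm_num
      rw [h1]
      calc 2 * |Real.sin ((k j:ℝ) * θ)| * |Real.cos ((k j:ℝ) * θ)|
          ≤ 2 * |Real.sin ((k j:ℝ) * θ)| * 1 := by
            apply mul_le_mul_of_nonneg_left hc' (by positivity)
        _ = 2 / Real.sin θ * |Real.sin ((k j:ℝ) * θ)| * Real.sin θ := by
            field_simp
    · have := (hs0.abs).const_mul (2 / Real.sin θ)
      simpa using this
  have hClim : Filter.Tendsto (fun j => Real.cos (m j * θ)) Filter.atTop (nhds 1) := by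
    have hcos2 : ∀ x : ℝ, Real.cos (2 * x) = 1 - 2 * (Real.sin x * Real.sin x) := by
      intro x
      rw [Real.cos_two_mul]
      have h := Real.sin_sq_add_cos_sq x
      nlinarith
    have heq : (fun j => Real.cos (m j * θ))
        = fun j => 1 - 2 * (Real.sin (k j * θ) * Real.sin (k j * θ)) := by
      funext j; rw [hmθ j, hcos2]
    rw [heq]
    have := Filter.Tendsto.sub
      (tendsto_const_nhds : Filter.Tendsto (fun _ : ℕ => (1:ℝ)) Filter.atTop (nhds 1))
      ((hs0.mul hs0).const_mul (2:ℝ))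
    simpa using this
  -- the matrices g ^ m j converge to the identity
  have hB : ∀ j : ℕ, Real.sin (((m j : ℝ) - 1) * θ) / Real.sin θ
      = A j * Real.cos θ - Real.cos (m j * θ) := by
    intro j
    have h1 : ((m j : ℝ) - 1) * θ = (m j : ℝ) * θ - θ := by ring
    rw [h1, Real.sin_sub, hA]
    field_simp
  have hMat : Filter.Tendsto (fun j => ((g ^ m j : SL(2,ℝ)) : Matrix (Fin 2) (Fin 2) ℝ))
      Filter.atTop (nhds 1) := by
    have heq : (fun j => ((g ^ m j : SL(2,ℝ)) : Matrix (Fin 2) (Fin 2) ℝ))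
        = fun j => A j • G - (A j * Real.cos θ - Real.cos (m j * θ)) • 1 := by
      funext j
      rw [hpow (m j), hB j]
    rw [heq]
    have := (hAlim.smul_const G).sub
      (((hAlim.mul_const (Real.cos θ)).sub hClim).smul_const (1 : Matrix (Fin 2) (Fin 2) ℝ))
    simpa using this
  have hSL : Filter.Tendsto (fun j => g ^ m j) Filter.atTop (nhds (1 : SL(2,ℝ))) := by
    apply tendsto_subtype_rng.mpr
    simpa using hMat
  have hPSL : Filter.Tendsto (fun j => toPSL (g ^ m j)) Filter.atTop (nhds (1 : PSL(2,ℝ))) := by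
    have hcont : Continuous (toPSL : SL(2,ℝ) → PSL(2,ℝ)) := continuous_quotient_mk'
    have := (hcont.tendsto 1).comp hSL
    simpa [Function.comp_def] using this
  have hgΓ : g ∈ Gamma μ := by
    rw [hg]
    exact mul_mem (Subgroup.subset_closure (Set.mem_insert _ _))
      (Subgroup.subset_closure (Set.mem_insert_of_mem _ rfl))
  have hev : ∀ᶠ j in Filter.atTop, toPSL (g ^ m j) ∈ U :=
    hPSL (hUopen.mem_nhds h1U)
  obtain ⟨j, hj⟩ := hev.exists
  have hmemH : toPSL (g ^ m j) ∈ (Gamma μ).map toPSL :=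
    ⟨g ^ m j, pow_mem hgΓ _, rfl⟩
  have hfin : ∃ n : ℕ, 0 < n ∧ (toPSL g) ^ n = 1 := by
    refine ⟨m j, by have := hk0 j; simp only [hm]; omega, ?_⟩
    rw [← map_pow]
    exact hU' _ hmemH hj
  refine ⟨hfin, ?_⟩
  -- second part : not free
  obtain ⟨n, hn0, hn1⟩ := hfin
  intro hinj
  have hker : g ^ n ∈ Subgroup.center (Matrix.SpecialLinearGroup (Fin 2) ℝ) := by
    have h1 : toPSL (g ^ n) = 1 := by rw [map_pow, hn1]
    exact (QuotientGroup.eq_one_iff _).mp h1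
  obtain ⟨r, hr2, hrM⟩ := Matrix.SpecialLinearGroup.mem_center_iff.mp hker
  have hr2' : r ^ 2 = 1 := by simpa using hr2
  have h2n : g ^ (2 * n) = 1 := by
    apply Subtype.coe_injective
    show ((g ^ (2*n) : SL(2,ℝ)) : Matrix (Fin 2) (Fin 2) ℝ)
        = ((1 : SL(2,ℝ)) : Matrix (Fin 2) (Fin 2) ℝ)
    have : ((g ^ (2*n) : SL(2,ℝ)) : Matrix (Fin 2) (Fin 2) ℝ)
        = ((g ^ n : SL(2,ℝ)) : Matrix (Fin 2) (Fin 2) ℝ) ^ 2 := by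
      rw [Matrix.SpecialLinearGroup.coe_pow, Matrix.SpecialLinearGroup.coe_pow,
        ← pow_mul, mul_comm 2 n, pow_mul]
    rw [this, ← hrM, ← map_pow, hr2']
    simp
  set f := (fun i : Fin 2 => if i = 0 then gamma1 μ else gamma2 μ)
  have hw : (FreeGroup.lift f) ((FreeGroup.of (0 : Fin 2) * FreeGroup.of 1) ^ (2 * n)) = 1 := by
    rw [map_pow, _root_.map_mul, FreeGroup.lift_apply_of, FreeGroup.lift_apply_of]
    simp only [f, if_pos rfl, if_neg (by decide : (1 : Fin 2) ≠ 0)]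
    exact h2n
  have hw1 : (FreeGroup.of (0 : Fin 2) * FreeGroup.of 1) ^ (2 * n) = 1 :=
    hinj (by rw [hw, _root_.map_one])
  have h0 := congrArg (FreeGroup.lift (fun _ : Fin 2 => Multiplicative.ofAdd (1 : ℤ))) hw1
  rw [map_pow, _root_.map_mul, FreeGroup.lift_apply_of, FreeGroup.lift_apply_of,
    MonoidHom.map_one, ← ofAdd_add, ← ofAdd_nsmul, ofAdd_eq_one, nsmul_eq_mul] at h0
  have h1 : ((2 * n : ℕ) : ℤ) * (1 + 1) = 0 := h0
  omega
end

section
/- Let μ > 2 be a real number. Every element g of the subgroup Γ_μ of SL(2, ℝ) that is not conjugate within Γ_μ to a power of γ₁(μ) or to a power of γ₂(μ) satisfies |trace(g)| ≥ μ² - 2, and equality holds if and only if g is conjugate within Γ_μ to (γ₁(μ)γ₂(μ))^(±1). -/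
open Matrix
open scoped MatrixGroups

set_option linter.unusedVariables false
set_option linter.unreachableTactic false
set_option linter.unusedTactic false
set_option linter.unnecessarySeqFocus false

noncomputable section

namespace Stmt5Aux

/-- Chebyshev-like minimal continuant sequence. -/
def cheb (x : ℝ) : ℕ → ℝ
  | 0 => 1
  | 1 => x
  | (n+2) => x * cheb x (n+1) - cheb x n

variable {x : ℝ}

lemma cheb_facts (hx : 2 < x) : ∀ n, 1 ≤ cheb x n ∧ cheb x n ≤ cheb x (n+1) := by
  intro n
  induction n using Nat.strong_induction_on with
  | _ n ih =>
    match n with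
    | 0 => constructor <;> simp [cheb] <;> linarith
    | 1 =>
      have : cheb x 2 = x * x - 1 := rfl
      constructor
      · simp [cheb]; linarith
      · rw [show (1:ℕ)+1 = 2 from rfl, this]; simp [cheb]; nlinarith
    | (n+2) =>
      obtain ⟨h1, h2⟩ := ih (n+1) (by omega)
      obtain ⟨h0, h02⟩ := ih n (by omega)
      have e : cheb x (n+3) = x * cheb x (n+2) - cheb x (n+1) := rfl
      have e2 : cheb x (n+2) = x * cheb x (n+1) - cheb x n := rfl
      constructor
      · nlinarith
      · rw [e]; nlinarith

lemma cheb_pos (hx : 2 < x) (n : ℕ) : 0 < cheb x n := lt_of_lt_of_le one_pos (cheb_facts hx n).1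

lemma cheb_one_le (hx : 2 < x) (n : ℕ) : 1 ≤ cheb x n := (cheb_facts hx n).1

lemma cheb_mono (hx : 2 < x) (n : ℕ) : cheb x n ≤ cheb x (n+1) := (cheb_facts hx n).2

/-- gaps `E n = cheb (n+1) - cheb n` are strictly increasing. -/
lemma cheb_gap_mono (hx : 2 < x) (n : ℕ) :
    cheb x (n+1) - cheb x n < cheb x (n+2) - cheb x (n+1) := by
  have e : cheb x (n+2) = x * cheb x (n+1) - cheb x n := rfl
  have h1 := cheb_one_le hx (n+1)
  nlinarith

/-- `D n = cheb (n+2) - cheb n` is strictly increasing. -/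
lemma cheb_D_mono (hx : 2 < x) (n : ℕ) :
    cheb x (n+2) - cheb x n < cheb x (n+3) - cheb x (n+1) := by
  have h1 := cheb_gap_mono hx n
  have h2 := cheb_gap_mono hx (n+1)
  have : cheb x (n+2) - cheb x n = (cheb x (n+2) - cheb x (n+1)) + (cheb x (n+1) - cheb x n) := by ring
  have h3 : cheb x (n+3) - cheb x (n+1) = (cheb x (n+3) - cheb x (n+2)) + (cheb x (n+2) - cheb x (n+1)) := by ring
  linarith

lemma cheb_two (hx : 2 < x) : cheb x 2 = x^2 - 1 := by
  show x * cheb x 1 - cheb x 0 = _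
  simp [cheb]; ring

lemma cheb_D_ge (hx : 2 < x) (n : ℕ) : x^2 - 2 ≤ cheb x (n+2) - cheb x n := by
  induction n with
  | zero =>
    rw [cheb_two hx]
    have h0 : cheb x 0 = 1 := rfl
    rw [h0]; linarith
  | succ n ih => have := cheb_D_mono hx n; linarith

lemma cheb_D_gt (hx : 2 < x) (n : ℕ) (hn : 1 ≤ n) : x^2 - 2 < cheb x (n+2) - cheb x n := by
  induction n with
  | zero => omega
  | succ n _ =>
    have h := cheb_D_ge hx n
    have := cheb_D_mono hx n
    linarith




/-- continuant generator matrix -/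
def Emat (z : ℝ) : Matrix (Fin 2) (Fin 2) ℝ := !![z, 1; 1, 0]

def PE (l : List ℝ) : Matrix (Fin 2) (Fin 2) ℝ := (l.map Emat).prod

@[simp] lemma PE_nil : PE [] = 1 := rfl

lemma PE_cons (z : ℝ) (l : List ℝ) : PE (z :: l) = Emat z * PE l := by
  simp [PE]

lemma PE_append (l m : List ℝ) : PE (l ++ m) = PE l * PE m := by
  simp [PE]

lemma PE_entries (z : ℝ) (l : List ℝ) :
    PE (z :: l) 0 0 = z * PE l 0 0 + PE l 1 0 ∧
    PE (z :: l) 1 0 = PE l 0 0 ∧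
    PE (z :: l) 0 1 = z * PE l 0 1 + PE l 1 1 ∧
    PE (z :: l) 1 1 = PE l 0 1 := by
  rw [PE_cons]
  constructor
  · simp [Emat, Matrix.mul_apply, Fin.sum_univ_two]
  constructor
  · simp [Emat, Matrix.mul_apply, Fin.sum_univ_two]
  constructor
  · simp [Emat, Matrix.mul_apply, Fin.sum_univ_two]
  · simp [Emat, Matrix.mul_apply, Fin.sum_univ_two]

lemma Emat_transpose (z : ℝ) : (Emat z)ᵀ = Emat z := by
  ext i j; fin_cases i <;> fin_cases j <;> simp [Emat]

lemma PE_reverse (l : List ℝ) : PE l.reverse = (PE l)ᵀ := by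
  induction l with
  | nil => simp
  | cons z l ih =>
    rw [List.reverse_cons, PE_append, PE_cons, ih]
    simp [Matrix.transpose_mul, Emat_transpose, PE]

/-- The key ratio estimate. -/
lemma PE_ratio (hx : 2 < x) :
    ∀ (l : List ℝ) (z : ℝ), x ≤ |z| → (∀ w ∈ l, x ≤ |w|) →
      cheb x (l.length + 1) * |PE l 0 0| ≤ cheb x l.length * |PE (z :: l) 0 0| := by
  intro l
  induction l with
  | nil =>
    intro z hz _
    have h0 : PE [] 0 0 = 1 := by simp [Matrix.one_apply]
    have h1 : PE [z] 0 0 = z := by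
      obtain ⟨e, _, _, _⟩ := PE_entries z []
      rw [e, h0]
      have : PE ([] : List ℝ) 1 0 = 0 := by simp [Matrix.one_apply]
      rw [this]; ring
    rw [h0, h1]
    have c0 : cheb x 0 = 1 := rfl
    have c1 : cheb x 1 = x := rfl
    simp only [List.length_nil, zero_add, c0, c1, abs_one, mul_one, one_mul]
    exact hz
  | cons w l ih =>
    intro z hz hmem
    have hw : x ≤ |w| := hmem w (List.mem_cons_self)
    have hml : ∀ u ∈ l, x ≤ |u| := fun u hu => hmem u (List.mem_cons_of_mem _ hu)
    obtain ⟨e1, e2, _, _⟩ := PE_entries z (w :: l)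
    obtain ⟨f1, f2, _, _⟩ := PE_entries w l
    set n := l.length with hn
    have IH := ih w hw hml
    -- notation
    set A := PE (w :: l) 0 0 with hA
    set A' := PE l 0 0 with hA'
    have hBA : PE (w :: l) 1 0 = A' := f2
    have key : |z * A + PE (w :: l) 1 0| ≥ x * |A| - |A'| := by
      rw [hBA]
      have h1 : |z * A + A'| ≥ |z * A| - |A'| := by
        have := abs_sub_abs_le_abs_sub (z * A) (-A')
        simp only [sub_neg_eq_add, abs_neg] at this
        linarith
      have h2 : |z * A| = |z| * |A| := abs_mul _ _
      nlinarith [abs_nonneg A, hz]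
    have hpos : (0:ℝ) < cheb x (n+1) := cheb_pos hx _
    have hpos2 : (0:ℝ) < cheb x n := cheb_pos hx _
    have crec : cheb x (n+2) = x * cheb x (n+1) - cheb x n := rfl
    -- goal : cheb (n+2) * |A| ≤ cheb (n+1) * |PE (z::w::l) 0 0|
    have lenz : (z :: w :: l).length = n + 2 := by simp [hn]
    have lenw : (w :: l).length = n + 1 := by simp [hn]
    calc cheb x ((w::l).length + 1) * |A|
        = cheb x (n+2) * |A| := by rw [lenw]
      _ = (x * cheb x (n+1) - cheb x n) * |A| := by rw [crec]
      _ = cheb x (n+1) * (x * |A|) - cheb x n * |A| := by ring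
      _ ≤ cheb x (n+1) * (x * |A|) - cheb x (n+1) * |A'| := by
          have : cheb x (n+1) * |A'| ≤ cheb x n * |A| := by
            simpa [lenw, hn] using IH
          linarith
      _ = cheb x (n+1) * (x * |A| - |A'|) := by ring
      _ ≤ cheb x (n+1) * |PE (z :: w :: l) 0 0| := by
          apply mul_le_mul_of_nonneg_left _ (le_of_lt hpos)
          rw [e1]; exact key

/-- entries grow at least like `cheb`. -/
lemma PE_lower (hx : 2 < x) :
    ∀ (l : List ℝ), (∀ w ∈ l, x ≤ |w|) → cheb x l.length ≤ |PE l 0 0| := by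
  intro l
  induction l with
  | nil =>
    intro _
    have h0 : PE [] 0 0 = 1 := by simp [Matrix.one_apply]
    rw [h0]; simp [cheb]
  | cons z l ih =>
    intro hmem
    have hz : x ≤ |z| := hmem z (List.mem_cons_self)
    have hml : ∀ u ∈ l, x ≤ |u| := fun u hu => hmem u (List.mem_cons_of_mem _ hu)
    have h1 := PE_ratio hx l z hz hml
    have h2 := ih hml
    have hpos : (0:ℝ) < cheb x l.length := cheb_pos hx _
    have hpos2 : (0:ℝ) < cheb x (l.length+1) := cheb_pos hx _
    have : cheb x (l.length+1) * cheb x l.length ≤ cheb x l.length * |PE (z::l) 0 0| := by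
      calc cheb x (l.length+1) * cheb x l.length ≤ cheb x (l.length + 1) * |PE l 0 0| := by
            exact mul_le_mul_of_nonneg_left h2 (le_of_lt hpos2)
        _ ≤ cheb x l.length * |PE (z :: l) 0 0| := h1
    have := (mul_le_mul_iff_right₀ hpos).mp (by linarith [this] : cheb x l.length * cheb x (l.length+1) ≤ cheb x l.length * |PE (z::l) 0 0|)
    simpa using this

lemma PE_trace_ge (hx : 2 < x) (l'' : List ℝ) (z w : ℝ)
    (hz : x ≤ |z|) (hw : x ≤ |w|) (hmem : ∀ u ∈ l'', x ≤ |u|) :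
    cheb x (l''.length + 2) - cheb x l''.length ≤ |Matrix.trace (PE (z :: w :: l''))| := by
  set k := l''.length with hk
  set l' : List ℝ := w :: l'' with hl'
  have hmem' : ∀ u ∈ l', x ≤ |u| := by
    intro u hu
    rcases List.mem_cons.mp hu with h | h
    · rw [h]; exact hw
    · exact hmem u h
  have hlen' : l'.length = k + 1 := by simp [hl', hk]
  -- step 1
  have ratio1 : cheb x (k + 2) * |PE l' 0 0| ≤ cheb x (k+1) * |PE (z :: l') 0 0| := by
    have := PE_ratio hx l' z hz hmem'
    rwa [hlen'] at this
  -- reverse of l'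
  obtain ⟨v, m, hvm⟩ : ∃ v m, l'.reverse = v :: m := by
    cases h : l'.reverse with
    | nil =>
      exfalso
      have h2 : l'.length = 0 := by rw [← List.length_reverse, h, List.length_nil]
      omega
    | cons v m => exact ⟨v, m, rfl⟩
  have hmlen : m.length = k := by
    have := congrArg List.length hvm
    simp [hlen'] at this
    omega
  have hmemrev : ∀ u ∈ l'.reverse, x ≤ |u| := by
    intro u hu; exact hmem' u (List.mem_reverse.mp hu)
  have hvx : x ≤ |v| := hmemrev v (by rw [hvm]; exact List.mem_cons_self)
  have hmmem : ∀ u ∈ m, x ≤ |u| := fun u hu => hmemrev u (by rw [hvm]; exact List.mem_cons_of_mem _ hu)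
  have ratio2 : cheb x (k + 1) * |PE m 0 0| ≤ cheb x k * |PE (v :: m) 0 0| := by
    have := PE_ratio hx m v hvx hmmem
    rwa [hmlen] at this
  -- identifications
  have idrev : PE (v :: m) 0 0 = PE l' 0 0 := by
    rw [← hvm, PE_reverse]; rfl
  have idD : PE (z :: l') 1 1 = PE m 0 0 := by
    obtain ⟨_, _, _, e4⟩ := PE_entries z l'
    rw [e4]
    have h1 : PE l' 0 1 = PE l'.reverse 1 0 := by rw [PE_reverse]; rfl
    rw [h1, hvm]
    obtain ⟨_, f2, _, _⟩ := PE_entries v m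
    exact f2
  -- combine: cheb (k+2) * |D| ≤ cheb k * |A|
  set A := PE (z :: l') 0 0 with hA
  set Dd := PE (z :: l') 1 1 with hD
  have hcp : ∀ n, (0:ℝ) < cheb x n := cheb_pos hx
  have comb : cheb x (k+2) * |Dd| ≤ cheb x k * |A| := by
    have h1 : cheb x (k+2) * (cheb x (k+1) * |Dd|) ≤ cheb x (k+2) * (cheb x k * |PE l' 0 0|) := by
      apply mul_le_mul_of_nonneg_left _ (le_of_lt (hcp _))
      rw [idD]
      calc cheb x (k+1) * |PE m 0 0| ≤ cheb x k * |PE (v::m) 0 0| := ratio2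
        _ = cheb x k * |PE l' 0 0| := by rw [idrev]
    have h2 : cheb x k * (cheb x (k + 2) * |PE l' 0 0|) ≤ cheb x k * (cheb x (k+1) * |A|) := by
      apply mul_le_mul_of_nonneg_left _ (le_of_lt (hcp _))
      exact ratio1
    have h3 : cheb x (k+1) * (cheb x (k+2) * |Dd|) ≤ cheb x (k+1) * (cheb x k * |A|) := by nlinarith
    exact le_of_mul_le_mul_left (by linarith) (hcp (k+1))
  have hAlow : cheb x (k+2) ≤ |A| := by
    have := PE_lower hx (z :: l') (by
      intro u hu
      rcases List.mem_cons.mp hu with h | h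
      · rw [h]; exact hz
      · exact hmem' u h)
    simpa [hlen', hA] using this
  have htr : Matrix.trace (PE (z :: l')) = A + Dd := by
    rw [Matrix.trace_fin_two]
  have habs : |A| - |Dd| ≤ |A + Dd| := by
    have := abs_add_le (A + Dd) (-Dd)
    simp only [add_neg_cancel_right, abs_neg] at this
    linarith
  have hDge : 0 ≤ cheb x (k+2) - cheb x k := by
    have := cheb_mono hx k
    have := cheb_mono hx (k+1)
    linarith
  have final : cheb x (k+2) * (cheb x (k+2) - cheb x k) ≤ cheb x (k+2) * |A + Dd| := by
    calc cheb x (k+2) * (cheb x (k+2) - cheb x k)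
        ≤ |A| * (cheb x (k+2) - cheb x k) := mul_le_mul_of_nonneg_right hAlow hDge
      _ = cheb x (k+2) * |A| - cheb x k * |A| := by ring
      _ ≤ cheb x (k+2) * |A| - cheb x (k+2) * |Dd| := by linarith [comb]
      _ = cheb x (k+2) * (|A| - |Dd|) := by ring
      _ ≤ cheb x (k+2) * |A + Dd| := mul_le_mul_of_nonneg_left habs (le_of_lt (hcp _))
  have := le_of_mul_le_mul_left final (hcp (k+2))
  rw [htr]
  linarith

def t1 (c : ℝ) : SL(2,ℝ) := ⟨!![1, c; 0, 1], by norm_num [Matrix.det_fin_two_of]⟩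
def t2 (c : ℝ) : SL(2,ℝ) := ⟨!![1, 0; -c, 1], by norm_num [Matrix.det_fin_two_of]⟩

lemma t1_mul (c d : ℝ) : t1 c * t1 d = t1 (c + d) := by
  ext i j
  rw [Matrix.SpecialLinearGroup.coe_mul]
  fin_cases i <;> fin_cases j <;>
    simp [t1, Matrix.SpecialLinearGroup.coe_mul, Matrix.mul_apply, Fin.sum_univ_two] <;> ring

lemma t2_mul (c d : ℝ) : t2 c * t2 d = t2 (c + d) := by
  ext i j
  rw [Matrix.SpecialLinearGroup.coe_mul]
  fin_cases i <;> fin_cases j <;>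
    simp [t2, Matrix.SpecialLinearGroup.coe_mul, Matrix.mul_apply, Fin.sum_univ_two] <;> ring

lemma t1_zero : t1 0 = 1 := by
  ext i j
  fin_cases i <;> fin_cases j <;>
    simp [t1, Matrix.SpecialLinearGroup.coe_one, Matrix.one_apply]

lemma t2_zero : t2 0 = 1 := by
  ext i j
  fin_cases i <;> fin_cases j <;>
    simp [t2, Matrix.SpecialLinearGroup.coe_one, Matrix.one_apply]

lemma t1_inv (c : ℝ) : (t1 c)⁻¹ = t1 (-c) := by
  apply inv_eq_of_mul_eq_one_right
  rw [t1_mul]; simpa using t1_zero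

lemma t2_inv (c : ℝ) : (t2 c)⁻¹ = t2 (-c) := by
  apply inv_eq_of_mul_eq_one_right
  rw [t2_mul]; simpa using t2_zero

lemma t1_zpow (c : ℝ) : ∀ n : ℤ, (t1 c) ^ n = t1 (n * c) := by
  intro n
  induction n using Int.induction_on with
  | zero => simpa using t1_zero.symm
  | succ n ih =>
    rw [_root_.zpow_add_one, ih, t1_mul]
    push_cast; ring_nf
  | pred n ih =>
    rw [_root_.zpow_sub_one, ih, t1_inv, t1_mul]
    push_cast; ring_nf

lemma t2_zpow (c : ℝ) : ∀ n : ℤ, (t2 c) ^ n = t2 (n * c) := by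
  intro n
  induction n using Int.induction_on with
  | zero => simpa using t2_zero.symm
  | succ n ih =>
    rw [_root_.zpow_add_one, ih, t2_mul]
    push_cast; ring_nf
  | pred n ih =>
    rw [_root_.zpow_sub_one, ih, t2_inv, t2_mul]
    push_cast; ring_nf

lemma gamma1_eq (μ : ℝ) : gamma1 μ = t1 μ := rfl
lemma gamma2_eq (μ : ℝ) : gamma2 μ = t2 μ := rfl

def blkSL (μ : ℝ) (a b : ℤ) : SL(2,ℝ) := gamma1 μ ^ a * gamma2 μ ^ b
def wSL (μ : ℝ) (B : List (ℤ × ℤ)) : SL(2,ℝ) := (B.map (fun p => blkSL μ p.1 p.2)).prod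
def zlist (μ : ℝ) (B : List (ℤ × ℤ)) : List ℝ :=
  B.flatMap (fun p => [(p.1 : ℝ) * μ, -((p.2 : ℝ) * μ)])

lemma coe_blk (μ : ℝ) (a b : ℤ) :
    ((blkSL μ a b : SL(2,ℝ)) : Matrix (Fin 2) (Fin 2) ℝ)
      = Emat ((a:ℝ) * μ) * Emat (-((b:ℝ) * μ)) := by
  rw [blkSL, gamma1_eq, gamma2_eq, t1_zpow, t2_zpow]
  ext i j
  rw [Matrix.SpecialLinearGroup.coe_mul]
  fin_cases i <;> fin_cases j <;>
    simp [t1, t2, Emat, Matrix.SpecialLinearGroup.coe_mul, Matrix.mul_apply,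
      Fin.sum_univ_two] <;> ring

lemma coe_wSL (μ : ℝ) (B : List (ℤ × ℤ)) :
    ((wSL μ B : SL(2,ℝ)) : Matrix (Fin 2) (Fin 2) ℝ) = PE (zlist μ B) := by
  induction B with
  | nil => simp [wSL, zlist, PE]
  | cons p B ih =>
    have h1 : wSL μ (p :: B) = blkSL μ p.1 p.2 * wSL μ B := by simp [wSL]
    have h2 : zlist μ (p :: B) = ((p.1:ℝ)*μ) :: (-((p.2:ℝ)*μ)) :: zlist μ B := by
      simp [zlist]
    rw [h1, h2, PE_cons, PE_cons, ← ih, ← mul_assoc, ← coe_blk]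
    simp [Matrix.SpecialLinearGroup.coe_mul]

lemma zlist_length (μ : ℝ) (B : List (ℤ × ℤ)) : (zlist μ B).length = 2 * B.length := by
  induction B with
  | nil => simp [zlist]
  | cons p B ih => simp [zlist] at ih ⊢; omega

lemma zlist_mem (μ : ℝ) (hμ : 0 < μ) (B : List (ℤ × ℤ))
    (hB : ∀ p ∈ B, p.1 ≠ 0 ∧ p.2 ≠ 0) : ∀ u ∈ zlist μ B, μ ≤ |u| := by
  intro u hu
  rw [zlist, List.mem_flatMap] at hu
  obtain ⟨p, hp, hup⟩ := hu
  obtain ⟨h1, h2⟩ := hB p hp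
  have key : ∀ m : ℤ, m ≠ 0 → μ ≤ |(m:ℝ) * μ| := by
    intro m hm
    rw [abs_mul, abs_of_pos hμ]
    have : (1:ℝ) ≤ |(m:ℝ)| := by
      rw [← Int.cast_abs]
      exact_mod_cast Int.one_le_abs hm
    nlinarith
  simp only [List.mem_cons, List.mem_singleton] at hup
  rcases hup with h | h | h
  · rw [h]; exact key p.1 h1
  · rw [h, abs_neg]; exact key p.2 h2
  · exact absurd h List.not_mem_nil

-- ===================== words =====================
def lett (μ : ℝ) (p : Bool × ℤ) : SL(2,ℝ) := (if p.1 then gamma1 μ else gamma2 μ) ^ p.2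

def ev (μ : ℝ) (L : List (Bool × ℤ)) : SL(2,ℝ) := (L.map (lett μ)).prod

@[simp] lemma ev_nil (μ : ℝ) : ev μ [] = 1 := rfl

lemma ev_cons (μ : ℝ) (p : Bool × ℤ) (L : List (Bool × ℤ)) :
    ev μ (p :: L) = lett μ p * ev μ L := by simp [ev]

lemma ev_append (μ : ℝ) (L M : List (Bool × ℤ)) :
    ev μ (L ++ M) = ev μ L * ev μ M := by simp [ev]

lemma gamma1_mem (μ : ℝ) : gamma1 μ ∈ Gamma μ :=
  Subgroup.subset_closure (by simp)

lemma gamma2_mem (μ : ℝ) : gamma2 μ ∈ Gamma μ :=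
  Subgroup.subset_closure (by simp)

lemma lett_mem (μ : ℝ) (p : Bool × ℤ) : lett μ p ∈ Gamma μ := by
  rw [lett]
  cases p.1 <;> simp <;> exact zpow_mem (by first | exact gamma1_mem μ | exact gamma2_mem μ) _

lemma ev_mem (μ : ℝ) (L : List (Bool × ℤ)) : ev μ L ∈ Gamma μ := by
  induction L with
  | nil => simpa using one_mem _
  | cons p L ih => rw [ev_cons]; exact mul_mem (lett_mem μ p) ih

lemma lett_zero (μ : ℝ) (i : Bool) : lett μ (i, 0) = 1 := by
  cases i <;> simp [lett]

lemma lett_merge (μ : ℝ) (i : Bool) (m n : ℤ) :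
    lett μ (i, m) * lett μ (i, n) = lett μ (i, m + n) := by
  cases i <;> simp [lett] <;> exact (_root_.zpow_add _ _ _).symm

lemma lett_neg (μ : ℝ) (p : Bool × ℤ) : lett μ (p.1, -p.2) = (lett μ p)⁻¹ := by
  cases p with | mk i n => cases i <;> simp [lett] <;> exact _root_.zpow_neg _ _

def invw (L : List (Bool × ℤ)) : List (Bool × ℤ) := (L.map (fun p => (p.1, -p.2))).reverse

lemma ev_invw (μ : ℝ) (L : List (Bool × ℤ)) : ev μ (invw L) = (ev μ L)⁻¹ := by
  induction L with
  | nil => simp [invw]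
  | cons p L ih =>
    have h : invw (p :: L) = invw L ++ [(p.1, -p.2)] := by simp [invw]
    rw [h, ev_append, ih, ev_cons, ev_cons, ev_nil, mul_one, lett_neg, _root_.mul_inv_rev]

lemma exists_word (μ : ℝ) (g : SL(2,ℝ)) (hg : g ∈ Gamma μ) : ∃ L, ev μ L = g := by
  induction hg using Subgroup.closure_induction with
  | mem x hx =>
    rcases hx with h | h
    · refine ⟨[(true, 1)], ?_⟩
      have hl : lett μ (true, 1) = gamma1 μ := by
        show (gamma1 μ) ^ (1:ℤ) = gamma1 μ
        exact zpow_one _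
      rw [ev_cons, ev_nil, mul_one, hl]; exact h.symm
    · refine ⟨[(false, 1)], ?_⟩
      have hl : lett μ (false, 1) = gamma2 μ := by
        show (gamma2 μ) ^ (1:ℤ) = gamma2 μ
        exact zpow_one _
      rw [ev_cons, ev_nil, mul_one, hl]; exact h.symm
  | one => exact ⟨[], rfl⟩
  | mul x y _ _ hx hy =>
    obtain ⟨L, hL⟩ := hx; obtain ⟨M, hM⟩ := hy
    exact ⟨L ++ M, by rw [ev_append, hL, hM]⟩
  | inv x _ hx =>
    obtain ⟨L, hL⟩ := hx
    exact ⟨invw L, by rw [ev_invw, hL]⟩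

-- ===================== reduction =====================
def RedL (L : List (Bool × ℤ)) : Prop :=
  L.Chain' (fun p q => p.1 ≠ q.1) ∧ ∀ p ∈ L, p.2 ≠ 0

def push : Bool × ℤ → List (Bool × ℤ) → List (Bool × ℤ)
  | p, [] => if p.2 = 0 then [] else [p]
  | p, q :: L => if p.1 = q.1 then push (p.1, p.2 + q.2) L
      else if p.2 = 0 then q :: L else p :: q :: L

lemma push_eval (μ : ℝ) : ∀ (L : List (Bool × ℤ)) (p : Bool × ℤ),
    ev μ (push p L) = lett μ p * ev μ L := by
  intro L
  induction L with
  | nil =>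
    intro p
    by_cases h : p.2 = 0
    · have e : push p [] = [] := by simp [push, h]
      have hp : p = (p.1, 0) := by rw [← h]
      have hp1 : lett μ p = 1 := by rw [hp]; exact lett_zero μ p.1
      rw [e, ev_nil, hp1, mul_one]
    · simp [push, h, ev_cons]
  | cons q L ih =>
    intro p
    by_cases h : p.1 = q.1
    · have e : push p (q :: L) = push (p.1, p.2 + q.2) L := by simp [push, h]
      rw [e, ih, ev_cons, ← mul_assoc]
      congr 1
      have hq : q = (p.1, q.2) := by rw [h]
      rw [hq, ← lett_merge]
    · by_cases h0 : p.2 = 0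
      · have e : push p (q :: L) = q :: L := by simp [push, h, h0]
        have hp : p = (p.1, 0) := by rw [← h0]
        rw [e, hp, lett_zero, one_mul]
      · have e : push p (q :: L) = p :: q :: L := by simp [push, h, h0]
        rw [e, ev_cons]

lemma push_length : ∀ (L : List (Bool × ℤ)) (p : Bool × ℤ),
    (push p L).length ≤ L.length + 1 := by
  intro L
  induction L with
  | nil => intro p; by_cases h : p.2 = 0 <;> simp [push, h]
  | cons q L ih =>
    intro p
    by_cases h : p.1 = q.1
    · have e : push p (q :: L) = push (p.1, p.2 + q.2) L := by simp [push, h]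
      rw [e]
      calc (push (p.1, p.2 + q.2) L).length ≤ L.length + 1 := ih _
        _ ≤ (q :: L).length + 1 := by simp
    · by_cases h0 : p.2 = 0
      · have e : push p (q :: L) = q :: L := by simp [push, h, h0]
        rw [e]; omega
      · have e : push p (q :: L) = p :: q :: L := by simp [push, h, h0]
        rw [e]; simp

lemma push_red : ∀ (L : List (Bool × ℤ)) (p : Bool × ℤ), RedL L → RedL (push p L) := by
  intro L
  induction L with
  | nil =>
    intro p _
    by_cases h : p.2 = 0
    · simp [push, h, RedL, List.Chain']
    · refine ⟨?_, ?_⟩ <;> simp [push, h, List.Chain']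
  | cons q L ih =>
    intro p hred
    obtain ⟨hch, hnz⟩ := hred
    by_cases h : p.1 = q.1
    · have e : push p (q :: L) = push (p.1, p.2 + q.2) L := by simp [push, h]
      rw [e]
      apply ih
      exact ⟨(List.isChain_cons.mp hch).2, fun r hr => hnz r (List.mem_cons_of_mem _ hr)⟩
    · by_cases h0 : p.2 = 0
      · have e : push p (q :: L) = q :: L := by simp [push, h, h0]
        rw [e]; exact ⟨hch, hnz⟩
      · have e : push p (q :: L) = p :: q :: L := by simp [push, h, h0]
        rw [e]
        refine ⟨List.isChain_cons_cons.mpr ⟨h, hch⟩, ?_⟩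
        intro r hr
        rcases List.mem_cons.mp hr with h' | h'
        · rw [h']; exact h0
        · exact hnz r h'

def red (L : List (Bool × ℤ)) : List (Bool × ℤ) := L.foldr push []

lemma red_eval (μ : ℝ) (L : List (Bool × ℤ)) : ev μ (red L) = ev μ L := by
  induction L with
  | nil => rfl
  | cons p L ih =>
    have e : red (p :: L) = push p (red L) := rfl
    rw [e, push_eval, ih, ev_cons]

lemma red_red (L : List (Bool × ℤ)) : RedL (red L) := by
  induction L with
  | nil => exact (⟨List.isChain_nil, by simp⟩ : RedL [])
  | cons p L ih => exact push_red _ p ih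

lemma red_length (L : List (Bool × ℤ)) : (red L).length ≤ L.length := by
  induction L with
  | nil => simp [red]
  | cons p L ih =>
    have e : red (p :: L) = push p (red L) := rfl
    rw [e]
    calc (push p (red L)).length ≤ (red L).length + 1 := push_length _ _
      _ ≤ L.length + 1 := by omega
      _ = (p :: L).length := by simp

-- ===================== blocks =====================
lemma wSL_cons (μ : ℝ) (p : ℤ × ℤ) (B : List (ℤ × ℤ)) :
    wSL μ (p :: B) = blkSL μ p.1 p.2 * wSL μ B := by simp [wSL]

lemma blk_as_lett (μ : ℝ) (a b : ℤ) :
    blkSL μ a b = lett μ (true, a) * lett μ (false, b) := by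
  simp [blkSL, lett]

lemma blocks_of (μ : ℝ) : ∀ (N : ℕ) (L : List (Bool × ℤ)), L.length ≤ N → RedL L →
    (∃ a T, L = (true, a) :: T) →
    (∀ z ∈ L.getLast?, z.1 = false) →
    ∃ B : List (ℤ × ℤ), B ≠ [] ∧ (∀ p ∈ B, p.1 ≠ 0 ∧ p.2 ≠ 0) ∧ ev μ L = wSL μ B := by
  intro N
  induction N with
  | zero =>
    intro L hlen _ hshape _
    obtain ⟨a, T, rfl⟩ := hshape
    simp at hlen
  | succ N ih =>
    intro L hlen hred hshape hlast
    obtain ⟨a, T, rfl⟩ := hshape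
    obtain ⟨hch, hnz⟩ := hred
    cases T with
    | nil =>
      have := hlast (true, a) (by simp)
      simp at this
    | cons q T₂ =>
      have hrel : (true : Bool) ≠ q.1 := (List.isChain_cons_cons.mp hch).1
      have hq1 : q.1 = false := by
        cases hq : q.1
        · rfl
        · exact absurd hq.symm hrel
      have ha : a ≠ 0 := hnz (true, a) (by simp)
      have hb : q.2 ≠ 0 := hnz q (by simp)
      cases T₂ with
      | nil =>
        refine ⟨[(a, q.2)], by simp, by simp [ha, hb], ?_⟩
        rw [ev_cons, ev_cons, ev_nil, mul_one, wSL_cons, blk_as_lett]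
        simp [wSL]
        congr 1
        rw [← hq1]
      | cons r T₃ =>
        have hrel2 : q.1 ≠ r.1 := (List.isChain_cons.mp ((List.isChain_cons_cons.mp hch).2)).1 r rfl
        have hr1 : r.1 = true := by
          cases hr : r.1
          · rw [hq1] at hrel2; exact absurd hr.symm hrel2
          · rfl
        have hred2 : RedL (r :: T₃) := by
          refine ⟨?_, ?_⟩
          · exact ((List.isChain_cons.mp ((List.isChain_cons.mp hch).2)).2)
          · intro s hs; exact hnz s (by simp [hs])
        have hlast2 : ∀ z ∈ (r :: T₃).getLast?, z.1 = false := by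
          intro z hz
          apply hlast
          rw [List.getLast?_cons_cons, List.getLast?_cons_cons]
          exact hz
        have hlen2 : (r :: T₃).length ≤ N := by
          simp at hlen ⊢; omega
        obtain ⟨B₂, hB₂ne, hB₂nz, hB₂ev⟩ := ih (r :: T₃) hlen2 hred2
          ⟨r.2, T₃, by rw [← hr1]⟩ hlast2
        refine ⟨(a, q.2) :: B₂, by simp, ?_, ?_⟩
        · intro p hp
          rcases List.mem_cons.mp hp with h | h
          · rw [h]; exact ⟨ha, hb⟩
          · exact hB₂nz p h
        · rw [ev_cons, ev_cons, hB₂ev, wSL_cons, blk_as_lett]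
          simp only [← mul_assoc]
          congr 2
          rw [← hq1]

-- ===================== dichotomy =====================
def GoodP (μ : ℝ) (g : SL(2,ℝ)) : Prop :=
  (∃ h ∈ Gamma μ, ∃ n : ℤ, g = h * (gamma1 μ) ^ n * h⁻¹ ∨ g = h * (gamma2 μ) ^ n * h⁻¹) ∨
  (∃ h ∈ Gamma μ, ∃ B : List (ℤ × ℤ), B ≠ [] ∧ (∀ p ∈ B, p.1 ≠ 0 ∧ p.2 ≠ 0) ∧
    g = h * wSL μ B * h⁻¹)

lemma good_conj (μ : ℝ) (x g : SL(2,ℝ)) (hx : x ∈ Gamma μ) (hg : GoodP μ g) :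
    GoodP μ (x * g * x⁻¹) := by
  rcases hg with ⟨h, hh, n, hor⟩ | ⟨h, hh, B, hBne, hBnz, heq⟩
  · left
    refine ⟨x * h, mul_mem hx hh, n, ?_⟩
    rcases hor with h1 | h1
    · left; rw [h1]; group
    · right; rw [h1]; group
  · right
    refine ⟨x * h, mul_mem hx hh, B, hBne, hBnz, ?_⟩
    rw [heq]; group

lemma main_dichotomy (μ : ℝ) : ∀ (N : ℕ) (L : List (Bool × ℤ)), L.length ≤ N →
    GoodP μ (ev μ L) := by
  intro N
  induction N with
  | zero =>
    intro L hlen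
    have : L = [] := List.eq_nil_of_length_eq_zero (by omega)
    subst this
    left
    exact ⟨1, one_mem _, 0, Or.inl (by simp)⟩
  | succ N ih =>
    intro L hlen
    have hRe := red_eval μ L
    have hRred := red_red L
    have hRlen := red_length L
    rw [← hRe]
    set R := red L with hR
    clear_value R
    clear hR hRe
    cases R with
    | nil =>
      left
      exact ⟨1, one_mem _, 0, Or.inl (by simp)⟩
    | cons p R1 =>
      cases R1 with
      | nil =>
        left
        refine ⟨1, one_mem _, p.2, ?_⟩
        cases hp : p.1
        · right; rw [ev_cons, ev_nil, mul_one, lett, hp]; simp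
        · left; rw [ev_cons, ev_nil, mul_one, lett, hp]; simp
      | cons q rest =>
        have hlen2 : rest.length + 2 ≤ N + 1 := by
          simp at hRlen; omega
        rcases List.eq_nil_or_concat (p :: q :: rest) with habs | ⟨Y, lp, hconcat⟩
        · simp at habs
        obtain ⟨hch, hnz⟩ := hRred
        by_cases hsame : p.1 = lp.1
        · -- merge case
          obtain ⟨Y', hY'⟩ : ∃ Y', Y = p :: Y' := by
            cases Y with
            | nil =>
              exfalso
              have := congrArg List.length hconcat
              simp at this
            | cons p' Y' =>
              have hpp : p' = p := by
                have := congrArg List.headI hconcat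
                simpa using this.symm
              exact ⟨Y', by rw [hpp]⟩
          have hT : q :: rest = Y' ++ [lp] := by
            have h2 := hconcat
            rw [hY'] at h2
            simpa using h2
          set L₂ : List (Bool × ℤ) := Y' ++ [(p.1, lp.2 + p.2)] with hL₂
          have h1 : ev μ ([lp] ++ [p]) = ev μ [(p.1, lp.2 + p.2)] := by
            simp only [ev_append, ev_cons, ev_nil, mul_one]
            have hlp : lp = (p.1, lp.2) := by rw [hsame]
            calc lett μ lp * lett μ p = lett μ (p.1, lp.2) * lett μ (p.1, p.2) := by
                  rw [← hlp]
              _ = lett μ (p.1, lp.2 + p.2) := lett_merge μ p.1 lp.2 p.2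
          have hev2 : ev μ ((q :: rest) ++ [p]) = ev μ L₂ := by
            rw [hT, List.append_assoc, ev_append, h1, ← ev_append, hL₂]
          have hlenL₂ : L₂.length ≤ N := by
            have := congrArg List.length hT
            simp [hL₂] at this ⊢
            omega
          have hgood := ih L₂ hlenL₂
          have hconj : ev μ (p :: q :: rest) = lett μ p * ev μ L₂ * (lett μ p)⁻¹ := by
            rw [← hev2]
            simp only [ev_append, ev_cons, ev_nil, mul_one]
            group
          rw [hconj]
          exact good_conj μ _ _ (lett_mem μ p) hgood
        · -- different first/last type
          have hlastR : (p :: q :: rest).getLast? = some lp := by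
            rw [hconcat, List.concat_eq_append]; exact List.getLast?_concat
          by_cases hptrue : p.1 = true
          · -- already block form
            have hlp : lp.1 = false := by
              cases h : lp.1
              · rfl
              · exact absurd (hptrue.trans h.symm) hsame
            have hlast : ∀ z ∈ (p :: q :: rest).getLast?, z.1 = false := by
              intro z hz
              rw [hlastR] at hz
              simp at hz
              rw [← hz]; exact hlp
            obtain ⟨B, hB1, hB2, hB3⟩ := blocks_of μ (N + 1) (p :: q :: rest)
              (by simp; omega) ⟨hch, hnz⟩ ⟨p.2, q :: rest, by rw [← hptrue]⟩ hlast
            right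
            exact ⟨1, one_mem _, B, hB1, hB2, by rw [hB3]; group⟩
          · -- rotate by one letter
            have hpfalse : p.1 = false := by
              cases h : p.1
              · rfl
              · exact absurd h hptrue
            have hlptrue : lp.1 = true := by
              cases h : lp.1
              · exact absurd (hpfalse.trans h.symm) hsame
              · rfl
            have hq1 : q.1 = true := by
              have hrel : p.1 ≠ q.1 := (List.isChain_cons_cons.mp hch).1
              cases h : q.1
              · exact absurd (hpfalse.trans h.symm) hrel
              · rfl
            set L₂ : List (Bool × ℤ) := (q :: rest) ++ [p] with hL₂
            have hlastqr : (q :: rest).getLast? = some lp := by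
              rwa [List.getLast?_cons_cons] at hlastR
            have hch2 : List.Chain' (fun a b => a.1 ≠ b.1) L₂ := by
              rw [hL₂]
              apply List.isChain_append.mpr
              refine ⟨(List.isChain_cons_cons.mp hch).2, List.isChain_singleton _, ?_⟩
              intro x hx y hy
              have hxl : lp = x := by
                rw [hlastqr] at hx; simpa using hx
              have hyp : p = y := by simpa using hy
              rw [← hxl, ← hyp, hlptrue, hpfalse]
              simp
            have hred2 : RedL L₂ := by
              refine ⟨hch2, ?_⟩
              intro s hs
              rw [hL₂] at hs
              rcases List.mem_append.mp hs with h | h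
              · exact hnz s (List.mem_cons_of_mem _ h)
              · have : s = p := by simpa using h
                rw [this]; exact hnz p (List.mem_cons_self)
            have hlast2 : ∀ z ∈ L₂.getLast?, z.1 = false := by
              intro z hz
              rw [hL₂, List.getLast?_concat] at hz
              simp at hz
              rw [← hz]; exact hpfalse
            have hshape2 : ∃ a T, L₂ = (true, a) :: T := by
              refine ⟨q.2, rest ++ [p], ?_⟩
              rw [hL₂]
              simp only [List.cons_append]
              congr 1
              rw [← hq1]
            obtain ⟨B, hB1, hB2, hB3⟩ := blocks_of μ (N + 1) L₂
              (by simp [hL₂]; omega) hred2 hshape2 hlast2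
            have hconj : ev μ (p :: q :: rest) = lett μ p * ev μ L₂ * (lett μ p)⁻¹ := by
              rw [hL₂]
              simp only [ev_append, ev_cons, ev_nil, mul_one]
              group
            right
            exact ⟨lett μ p, lett_mem μ p, B, hB1, hB2, by rw [hconj, hB3]⟩


lemma conj_trace (u w : SL(2,ℝ)) :
    Matrix.trace ((u * w * u⁻¹ : SL(2,ℝ)) : Matrix (Fin 2) (Fin 2) ℝ)
      = Matrix.trace ((w : SL(2,ℝ)) : Matrix (Fin 2) (Fin 2) ℝ) := by
  have h1 : ((u * w * u⁻¹ : SL(2,ℝ)) : Matrix (Fin 2) (Fin 2) ℝ)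
      = (u : Matrix (Fin 2) (Fin 2) ℝ) * (w : Matrix (Fin 2) (Fin 2) ℝ)
        * ((u⁻¹ : SL(2,ℝ)) : Matrix (Fin 2) (Fin 2) ℝ) := by
    simp
  rw [h1, Matrix.trace_mul_comm]
  have h2 : ((u⁻¹ : SL(2,ℝ)) : Matrix (Fin 2) (Fin 2) ℝ) * (u : Matrix (Fin 2) (Fin 2) ℝ) = 1 := by
    rw [← Matrix.SpecialLinearGroup.coe_mul, inv_mul_cancel, Matrix.SpecialLinearGroup.coe_one]
  rw [← mul_assoc, h2, one_mul]

lemma PE_two_trace (z w : ℝ) : Matrix.trace (PE [z, w]) = z * w + 2 := by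
  have h : PE [z, w] = Emat z * (Emat w * 1) := by simp [PE]
  rw [h, Matrix.trace_fin_two]
  simp [Emat, Matrix.mul_apply, Fin.sum_univ_two]
  ring

lemma trace_g1g2 (μ : ℝ) :
    Matrix.trace ((gamma1 μ * gamma2 μ : SL(2,ℝ)) : Matrix (Fin 2) (Fin 2) ℝ) = 2 - μ^2 := by
  rw [Matrix.trace_fin_two]
  rw [Matrix.SpecialLinearGroup.coe_mul]
  simp [Matrix.SpecialLinearGroup.coe_mul, gamma1, gamma2, Matrix.mul_apply, Fin.sum_univ_two]
  ring

lemma trace_g1g2_inv (μ : ℝ) :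
    Matrix.trace (((gamma1 μ * gamma2 μ)⁻¹ : SL(2,ℝ)) : Matrix (Fin 2) (Fin 2) ℝ) = 2 - μ^2 := by
  have h : (gamma1 μ * gamma2 μ)⁻¹ = t2 (-μ) * t1 (-μ) := by
    rw [_root_.mul_inv_rev, gamma1_eq, gamma2_eq, t1_inv, t2_inv]
  rw [h, Matrix.trace_fin_two]
  rw [Matrix.SpecialLinearGroup.coe_mul]
  simp [Matrix.SpecialLinearGroup.coe_mul, t1, t2, Matrix.mul_apply, Fin.sum_univ_two]
  ring

lemma zlist_cons (μ : ℝ) (p : ℤ × ℤ) (B : List (ℤ × ℤ)) :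
    zlist μ (p :: B) = ((p.1:ℝ)*μ) :: (-((p.2:ℝ)*μ)) :: zlist μ B := by simp [zlist]

lemma wSL_nil (μ : ℝ) : wSL μ [] = 1 := rfl

lemma blk_one_one (μ : ℝ) : blkSL μ 1 1 = gamma1 μ * gamma2 μ := by
  rw [blkSL, zpow_one, zpow_one]

lemma blk_neg_neg (μ : ℝ) :
    blkSL μ (-1) (-1) = gamma2 μ * (gamma1 μ * gamma2 μ)⁻¹ * (gamma2 μ)⁻¹ := by
  rw [blkSL]
  group

end Stmt5Aux

end

/-- Let `μ > 2`. Every element `g` of `Γ_μ` that is not conjugate within `Γ_μ` to a power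
of `γ₁(μ)` or to a power of `γ₂(μ)` satisfies `|trace(g)| ≥ μ² - 2`, and equality holds
if and only if `g` is conjugate within `Γ_μ` to `(γ₁(μ)γ₂(μ))^(±1)`. -/
theorem stmt5 (μ : ℝ) (hμ : 2 < μ) (g : SL(2, ℝ)) (hg : g ∈ Gamma μ)
    (hnot : ¬ ∃ h ∈ Gamma μ, ∃ n : ℤ,
      g = h * (gamma1 μ) ^ n * h⁻¹ ∨ g = h * (gamma2 μ) ^ n * h⁻¹) :
    μ ^ 2 - 2 ≤ |Matrix.trace (g : Matrix (Fin 2) (Fin 2) ℝ)| ∧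
    (|Matrix.trace (g : Matrix (Fin 2) (Fin 2) ℝ)| = μ ^ 2 - 2 ↔
      ∃ h ∈ Gamma μ,
        g = h * (gamma1 μ * gamma2 μ) * h⁻¹ ∨ g = h * (gamma1 μ * gamma2 μ)⁻¹ * h⁻¹) := by
  have hμ0 : (0:ℝ) < μ := by linarith
  obtain ⟨L, hL⟩ := Stmt5Aux.exists_word μ g hg
  have hgood := Stmt5Aux.main_dichotomy μ L.length L le_rfl
  rw [hL] at hgood
  rcases hgood with hleft | ⟨h, hh, B, hBne, hBnz, hEq⟩
  · exact absurd hleft hnot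
  obtain ⟨pb, B', rfl⟩ : ∃ pb B', B = pb :: B' := by
    cases B with
    | nil => exact absurd rfl hBne
    | cons a b => exact ⟨a, b, rfl⟩
  have hzl : Stmt5Aux.zlist μ (pb :: B')
      = ((pb.1:ℝ)*μ) :: (-((pb.2:ℝ)*μ)) :: Stmt5Aux.zlist μ B' := Stmt5Aux.zlist_cons μ pb B'
  have htrg : Matrix.trace (g : Matrix (Fin 2) (Fin 2) ℝ)
      = Matrix.trace (Stmt5Aux.PE (Stmt5Aux.zlist μ (pb :: B'))) := by
    rw [hEq, Stmt5Aux.conj_trace, Stmt5Aux.coe_wSL]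
  have hmemall := Stmt5Aux.zlist_mem μ hμ0 (pb :: B') hBnz
  have hz1 : μ ≤ |(pb.1:ℝ)*μ| := hmemall _ (by rw [hzl]; exact List.mem_cons_self)
  have hz2 : μ ≤ |(-((pb.2:ℝ)*μ))| := hmemall _ (by rw [hzl]; simp)
  have hmem' : ∀ u ∈ Stmt5Aux.zlist μ B', μ ≤ |u| := by
    intro u hu
    exact hmemall u (by rw [hzl]; simp [hu])
  have hcore := Stmt5Aux.PE_trace_ge hμ (Stmt5Aux.zlist μ B')
    ((pb.1:ℝ)*μ) (-((pb.2:ℝ)*μ)) hz1 hz2 hmem'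
  rw [← hzl] at hcore
  rw [htrg]
  refine ⟨le_trans (Stmt5Aux.cheb_D_ge hμ _) hcore, ?_, ?_⟩
  · intro heq
    by_cases hB' : B' = []
    · subst hB'
      have hnil : Stmt5Aux.zlist μ ([] : List (ℤ × ℤ)) = [] := rfl
      rw [hzl, hnil, Stmt5Aux.PE_two_trace] at heq
      have ha : pb.1 ≠ 0 := (hBnz pb (List.mem_cons_self)).1
      have hb : pb.2 ≠ 0 := (hBnz pb (List.mem_cons_self)).2
      have hm : pb.1 * pb.2 = 1 := by
        have hrew : (pb.1:ℝ)*μ * -((pb.2:ℝ)*μ) + 2 = -(((pb.1 * pb.2 : ℤ)):ℝ) * μ^2 + 2 := by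
          push_cast; ring
        rw [hrew] at heq
        have hb0 : (0:ℝ) ≤ μ^2 - 2 := by nlinarith
        have hmabs : (1:ℝ) ≤ |((pb.1*pb.2 : ℤ):ℝ)| := by
          rw [← Int.cast_abs]
          exact_mod_cast Int.one_le_abs (mul_ne_zero ha hb)
        rcases (abs_eq hb0).mp heq with hc | hc
        · exfalso
          have h4 : ((pb.1*pb.2:ℤ):ℝ) * μ^2 = 4 - μ^2 := by linarith
          have h5 : |((pb.1*pb.2:ℤ):ℝ)| * μ^2 = μ^2 - 4 := by
            have h6 : |((pb.1*pb.2:ℤ):ℝ) * μ^2| = |4 - μ^2| := by rw [h4]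
            rw [abs_mul, abs_of_nonneg (by positivity : (0:ℝ) ≤ μ^2)] at h6
            rw [h6, abs_of_nonpos (by nlinarith)]
            ring
          nlinarith
        · have h4 : ((pb.1*pb.2:ℤ):ℝ) * μ^2 = μ^2 := by linarith
          have hμ2 : (μ:ℝ)^2 ≠ 0 := by positivity
          have h5 : ((pb.1*pb.2:ℤ):ℝ) = 1 := mul_right_cancel₀ hμ2 (by rw [h4, one_mul])
          exact_mod_cast h5
      rcases Int.mul_eq_one_iff_eq_one_or_neg_one.mp hm with ⟨h1, h2⟩ | ⟨h1, h2⟩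
      · refine ⟨h, hh, Or.inl ?_⟩
        rw [hEq, Stmt5Aux.wSL_cons, Stmt5Aux.wSL_nil, mul_one, h1, h2, Stmt5Aux.blk_one_one]
      · refine ⟨h * gamma2 μ, mul_mem hh (Stmt5Aux.gamma2_mem μ), Or.inr ?_⟩
        rw [hEq, Stmt5Aux.wSL_cons, Stmt5Aux.wSL_nil, mul_one, h1, h2, Stmt5Aux.blk_neg_neg]
        group
    · exfalso
      have hlen' : 1 ≤ (Stmt5Aux.zlist μ B').length := by
        rw [Stmt5Aux.zlist_length]
        have := List.length_pos_iff.mpr hB'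
        omega
      have hstrict := Stmt5Aux.cheb_D_gt hμ _ hlen'
      linarith
  · rintro ⟨h', hh', hor⟩
    rw [← htrg]
    rcases hor with hcase | hcase
    · rw [hcase, Stmt5Aux.conj_trace, Stmt5Aux.trace_g1g2, abs_of_nonpos (by nlinarith)]
      ring
    · rw [hcase, Stmt5Aux.conj_trace, Stmt5Aux.trace_g1g2_inv, abs_of_nonpos (by nlinarith)]
      ring
end

section
/- Let A be a symmetric matrix with nonnegative integer entries and zero diagonal which is irreducible (i.e., the multigraph it describes is connected), and suppose some entry of A is at least 2 (a multiple edge). If the spectral radius of A is strictly greater than 2, then the spectral radius of A is at least √5. -/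
open Matrix

section AuxLemmas

open Polynomial

lemma aux_charpoly_isRoot_iff {K : Type*} [Field K] {m : Type*} [Fintype m] [DecidableEq m]
    (M : Matrix m m K) (z : K) :
    M.charpoly.IsRoot z ↔ ∃ v, v ≠ 0 ∧ M.mulVec v = z • v := by
  have h1 : M.charpoly.eval z = ((charmatrix M).map (Polynomial.evalRingHom z)).det := by
    have := RingHom.map_det (Polynomial.evalRingHom z) M.charmatrix
    simpa [Matrix.charpoly, RingHom.mapMatrix_apply] using this
  have h2 : (charmatrix M).map (Polynomial.evalRingHom z) = z • (1 : Matrix m m K) - M := by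
    ext i j
    by_cases h : i = j
    · subst h; simp [charmatrix_apply_eq]
    · simp [charmatrix_apply_ne _ _ _ h, Matrix.one_apply_ne h]
  have h3 : (z • (1 : Matrix m m K) - M) = -(M - z • 1) := by rw [neg_sub]
  constructor
  · intro hr
    have hdet : (M - z • (1 : Matrix m m K)).det = 0 := by
      have : ((-1 : K) ^ Fintype.card m) * (M - z • 1).det = 0 := by
        rw [← Matrix.det_neg, ← h3, ← h2, ← h1]; exact hr
      rcases mul_eq_zero.mp this with h | h
      · exact absurd h (pow_ne_zero _ (neg_ne_zero.mpr one_ne_zero))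
      · exact h
    obtain ⟨v, hv, hv0⟩ := (Matrix.exists_mulVec_eq_zero_iff).mpr hdet
    refine ⟨v, hv, ?_⟩
    rwa [Matrix.sub_mulVec, Matrix.smul_mulVec, Matrix.one_mulVec, sub_eq_zero] at hv0
  · rintro ⟨v, hv, hmv⟩
    have hdet : (M - z • (1 : Matrix m m K)).det = 0 := by
      rw [← Matrix.exists_mulVec_eq_zero_iff]
      exact ⟨v, hv, by
        rw [Matrix.sub_mulVec, Matrix.smul_mulVec, Matrix.one_mulVec, hmv, sub_self]⟩
    show M.charpoly.eval z = 0
    rw [h1, h2, h3, Matrix.det_neg, hdet, mul_zero]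

lemma aux_exists_eigen {n : ℕ} (B : Matrix (Fin n) (Fin n) ℝ) (hsym : B.IsHermitian)
    (w : Fin n → ℝ) (hw : w ≠ 0) :
    ∃ μ : ℝ, B.charpoly.IsRoot μ ∧
      (∑ i, (∑ j, B i j * w j) * w i) / (∑ i, w i ^ 2) ≤ μ := by
  set E := EuclideanSpace ℝ (Fin n)
  set T : E →ₗ[ℝ] E := Matrix.toEuclideanLin B with hT_def
  have hx0ne : (WithLp.equiv 2 (Fin n → ℝ)).symm w ≠ 0 := by simpa using hw
  haveI : Nontrivial E := ⟨⟨(WithLp.equiv 2 (Fin n → ℝ)).symm w, 0, hx0ne⟩⟩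
  have hT : T.IsSymmetric := Matrix.isHermitian_iff_isSymmetric.mp hsym
  have heig := hT.hasEigenvalue_iSup_of_finiteDimensional
  set μ : ℝ := ⨆ x : { x : E // x ≠ 0 }, RCLike.re (inner ℝ (T x) (x : E) : ℝ) / ‖(x : E)‖ ^ 2 with hμ
  refine ⟨μ, ?_, ?_⟩
  · obtain ⟨v, hv, hv0⟩ := heig.exists_hasEigenvector
    have happ : T v = μ • v := Module.End.mem_eigenspace_iff.mp hv
    rw [aux_charpoly_isRoot_iff]
    refine ⟨WithLp.equiv 2 (Fin n → ℝ) v, by simpa using hv0, ?_⟩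
    have := congrArg (WithLp.equiv 2 (Fin n → ℝ)) happ
    change Matrix.toLin' B (WithLp.equiv 2 (Fin n → ℝ) v) = μ • WithLp.equiv 2 (Fin n → ℝ) v at this
    simpa [Matrix.toLin'_apply] using this
  · set T' : E →L[ℝ] E := LinearMap.toContinuousLinearMap T with hT'
    have hbdd : BddAbove (Set.range fun x : { x : E // x ≠ 0 } =>
        RCLike.re (inner ℝ (T x) (x : E) : ℝ) / ‖(x : E)‖ ^ 2) := by
      refine ⟨‖T'‖, ?_⟩
      rintro r ⟨x, rfl⟩
      have hx : (0:ℝ) < ‖(x:E)‖ ^ 2 := pow_pos (norm_pos_iff.mpr x.2) 2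
      rw [div_le_iff₀ hx]
      have h1 : (inner ℝ (T x) (x : E) : ℝ) ≤ ‖T (x : E)‖ * ‖(x : E)‖ :=
        real_inner_le_norm _ _
      have h2 : ‖T (x : E)‖ ≤ ‖T'‖ * ‖(x : E)‖ := T'.le_opNorm _
      have h3 : ‖T (x:E)‖ * ‖(x:E)‖ ≤ (‖T'‖ * ‖(x:E)‖) * ‖(x:E)‖ :=
        mul_le_mul_of_nonneg_right h2 (norm_nonneg _)
      calc RCLike.re (inner ℝ (T x) (x : E) : ℝ) = (inner ℝ (T x) (x : E) : ℝ) := rfl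
        _ ≤ (‖T'‖ * ‖(x:E)‖) * ‖(x:E)‖ := le_trans h1 h3
        _ = ‖T'‖ * ‖(x:E)‖ ^ 2 := by ring
    have hle := le_ciSup hbdd (⟨(WithLp.equiv 2 (Fin n → ℝ)).symm w, hx0ne⟩ : { x : E // x ≠ 0 })
    refine le_trans (le_of_eq ?_) hle
    have hinner : (inner ℝ (T ((WithLp.equiv 2 (Fin n → ℝ)).symm w))
        ((WithLp.equiv 2 (Fin n → ℝ)).symm w) : ℝ) = ∑ i, (∑ j, B i j * w j) * w i := by
      change w ⬝ᵥ star (B *ᵥ w) = _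
      simp only [dotProduct, star_trivial, Matrix.mulVec]
      exact Finset.sum_congr rfl fun i _ => mul_comm _ _
    have hnorm : ‖(WithLp.equiv 2 (Fin n → ℝ)).symm w‖ ^ 2 = ∑ i, w i ^ 2 := by
      rw [EuclideanSpace.norm_eq, Real.sq_sqrt (by positivity)]
      simp [sq_abs]
    simp only [hinner, hnorm]
    rfl

end AuxLemmas

/-- The spectral radius of a real square matrix: the maximum (supremum) of the moduli of
its complex eigenvalues, i.e. of the complex roots of its characteristic polynomial. -/
noncomputable def specRad {n : Type*} [Fintype n] [DecidableEq n]
    (A : Matrix n n ℝ) : ℝ :=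
  sSup ((fun z : ℂ => ‖z‖) '' {z : ℂ | (A.charpoly.map (algebraMap ℝ ℂ)).IsRoot z})

section AuxSpecRad

open Polynomial

lemma aux_root_abs_le_specRad {m : Type*} [Fintype m] [DecidableEq m]
    (B : Matrix m m ℝ) (z : ℂ) (hz : (B.charpoly.map (algebraMap ℝ ℂ)).IsRoot z) :
    ‖z‖ ≤ specRad B := by
  apply le_csSup
  · have hp : (B.charpoly.map (algebraMap ℝ ℂ)) ≠ 0 :=
      ((Matrix.charpoly_monic B).map _).ne_zero
    exact ((Polynomial.finite_setOf_isRoot hp).image _).bddAbove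
  · exact ⟨z, hz, rfl⟩

lemma aux_specRad_le {m : Type*} [Fintype m] [DecidableEq m]
    (B : Matrix m m ℝ) (r : ℝ) (hr : 0 ≤ r)
    (h : ∀ z : ℂ, (B.charpoly.map (algebraMap ℝ ℂ)).IsRoot z → ‖z‖ ≤ r) :
    specRad B ≤ r := by
  apply Real.sSup_le _ hr
  rintro x ⟨z, hz, rfl⟩
  exact h z hz

end AuxSpecRad

/-- Let `A` be a symmetric matrix with nonnegative integer entries and zero diagonal
(the adjacency matrix of a finite multigraph without loops) which is irreducible (i.e.,
the multigraph is connected: for all `i, j` some power of `A` has nonzero `(i,j)` entry),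
and suppose some entry of `A` is at least `2` (a multiple edge). If the spectral radius
of `A` is strictly greater than `2`, then it is at least `√5`. -/
theorem stmt15 {n : ℕ} (A : Matrix (Fin n) (Fin n) ℕ)
    (hsymm : A.IsSymm) (hdiag : ∀ i, A i i = 0)
    (hirr : ∀ i j : Fin n, ∃ k : ℕ, (A ^ k) i j ≠ 0)
    (hmult : ∃ i j : Fin n, 2 ≤ A i j)
    (hgt : 2 < specRad (A.map (fun a => (a : ℝ)))) :
    Real.sqrt 5 ≤ specRad (A.map (fun a => (a : ℝ))) := by
  classical
  obtain ⟨i, j, hij⟩ := hmult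
  set B : Matrix (Fin n) (Fin n) ℝ := A.map (fun a => (a : ℝ)) with hBdef
  have hBapp : ∀ a b, B a b = (A a b : ℝ) := fun a b => rfl
  have hsymN : ∀ a b, A b a = A a b := fun a b => hsymm.apply a b
  have hij' : i ≠ j := by
    intro h; rw [h, hdiag] at hij; omega
  have hBherm : B.IsHermitian := by
    ext a b
    simp only [Matrix.conjTranspose_apply, hBapp, star_trivial]
    exact_mod_cast hsymN a b
  -- the key Rayleigh-quotient criterion
  have key : ∀ w : Fin n → ℝ, w ≠ 0 → 0 < (∑ t, w t ^ 2) →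
      Real.sqrt 5 * (∑ t, w t ^ 2) ≤ ∑ t, (∑ s, B t s * w s) * w t →
      Real.sqrt 5 ≤ specRad B := by
    intro w hw hN hQ
    obtain ⟨μ, hroot, hle⟩ := aux_exists_eigen B hBherm w hw
    have h1 : Real.sqrt 5 ≤ μ :=
      le_trans ((le_div_iff₀ hN).mpr (by linarith)) hle
    have hroot' : ((B.charpoly.map (algebraMap ℝ ℂ))).IsRoot ((μ : ℝ) : ℂ) := by
      have := hroot.map (f := algebraMap ℝ ℂ)
      simpa using this
    have h2 : μ ≤ specRad B :=
      calc μ ≤ |μ| := le_abs_self μ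
        _ = ‖((μ : ℝ) : ℂ)‖ := (Complex.norm_real μ).symm
        _ ≤ specRad B := aux_root_abs_le_specRad B _ hroot'
    linarith
  -- sum helpers
  have pair_sum : ∀ (u v : Fin n), u ≠ v → ∀ g : Fin n → ℝ,
      (∀ t, t ≠ u → t ≠ v → g t = 0) → ∑ t, g t = g u + g v := by
    intro u v huv g hg
    rw [← Finset.sum_subset (Finset.subset_univ ({u, v} : Finset (Fin n)))
      (fun t _ ht => by
        simp only [Finset.mem_insert, Finset.mem_singleton, not_or] at ht
        exact hg t ht.1 ht.2)]
    rw [Finset.sum_insert (by simp [huv]), Finset.sum_singleton]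
  have triple_sum : ∀ (u v k : Fin n), u ≠ v → u ≠ k → v ≠ k → ∀ g : Fin n → ℝ,
      (∀ t, t ≠ u → t ≠ v → t ≠ k → g t = 0) → ∑ t, g t = g u + g v + g k := by
    intro u v k huv huk hvk g hg
    rw [← Finset.sum_subset (Finset.subset_univ ({u, v, k} : Finset (Fin n)))
      (fun t _ ht => by
        simp only [Finset.mem_insert, Finset.mem_singleton, not_or] at ht
        exact hg t ht.1 ht.2.1 ht.2.2)]
    rw [Finset.sum_insert (by simp [huv, huk]), Finset.sum_insert (by simp [hvk]),
      Finset.sum_singleton, add_assoc]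
  by_cases h3 : ∃ a b, 3 ≤ A a b
  · -- a multiple edge of multiplicity ≥ 3
    obtain ⟨a, b, hab⟩ := h3
    have hab' : a ≠ b := by intro h; rw [h, hdiag] at hab; omega
    set w : Fin n → ℝ := fun t => if t = a then 1 else if t = b then 1 else 0 with hwdef
    have hwa : w a = 1 := by simp [hwdef]
    have hwb : w b = 1 := by simp [hwdef, hab'.symm]
    have hwz : ∀ t, t ≠ a → t ≠ b → w t = 0 := by intro t h1 h2; simp [hwdef, h1, h2]
    have hw0 : w ≠ 0 := by
      intro h
      have := congrFun h a
      rw [hwa] at this; simpa using this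
    have hNval : (∑ t, w t ^ 2) = 2 := by
      rw [pair_sum a b hab' _ (fun t h1 h2 => by rw [hwz t h1 h2]; ring)]
      rw [hwa, hwb]; norm_num
    have hQval : (∑ t, (∑ s, B t s * w s) * w t) =
        (B a a * 1 + B a b * 1) * 1 + (B b a * 1 + B b b * 1) * 1 := by
      rw [pair_sum a b hab' _ (fun t h1 h2 => by rw [hwz t h1 h2]; ring)]
      rw [pair_sum a b hab' (fun s => B a s * w s)
        (fun t h1 h2 => by show B a t * w t = 0; rw [hwz t h1 h2]; ring)]
      rw [pair_sum a b hab' (fun s => B b s * w s)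
        (fun t h1 h2 => by show B b t * w t = 0; rw [hwz t h1 h2]; ring)]
      rw [hwa, hwb]
    have hs5 : Real.sqrt 5 ≤ 3 := by
      nlinarith [Real.sq_sqrt (show (0:ℝ) ≤ 5 by norm_num), Real.sqrt_nonneg 5]
    refine key w hw0 (by rw [hNval]; norm_num) ?_
    rw [hNval, hQval]
    have h1 : (3:ℝ) ≤ B a b := by rw [hBapp]; exact_mod_cast hab
    have h2 : (3:ℝ) ≤ B b a := by rw [hBapp, hsymN]; exact_mod_cast hab
    have haa : B a a = 0 := by rw [hBapp, hdiag]; norm_num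
    have hbb : B b b = 0 := by rw [hBapp, hdiag]; norm_num
    nlinarith
  · push_neg at h3
    by_cases hk : ∃ k, (k ≠ i ∧ k ≠ j) ∧ (1 ≤ A j k ∨ 1 ≤ A i k)
    · -- a multiple edge with a pendant edge
      obtain ⟨k, ⟨hki, hkj⟩, hor⟩ := hk
      obtain ⟨u, v, huv2, hvk1, huv, hku, hkv⟩ :
          ∃ u v, 2 ≤ A u v ∧ 1 ≤ A v k ∧ u ≠ v ∧ k ≠ u ∧ k ≠ v := by
        rcases hor with h | h
        · exact ⟨i, j, hij, h, hij', hki, hkj⟩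
        · exact ⟨j, i, by rwa [← hsymN j i], h, hij'.symm, hkj, hki⟩
      set s : ℝ := Real.sqrt 5 with hsdef
      have hs0 : 0 ≤ s := Real.sqrt_nonneg 5
      have hs2 : s ^ 2 = 5 := Real.sq_sqrt (by norm_num)
      set w : Fin n → ℝ := fun t => if t = u then 2 else if t = v then s else
        if t = k then 1 else 0 with hwdef
      have hwu : w u = 2 := by simp [hwdef]
      have hwv : w v = s := by simp [hwdef, huv.symm]
      have hwk : w k = 1 := by simp [hwdef, hku, hkv]
      have hwz : ∀ t, t ≠ u → t ≠ v → t ≠ k → w t = 0 := by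
        intro t h1 h2 h3; simp [hwdef, h1, h2, h3]
      have hw0 : w ≠ 0 := by
        intro h
        have := congrFun h u
        rw [hwu] at this; simpa using this
      have hNval : (∑ t, w t ^ 2) = 10 := by
        rw [triple_sum u v k huv (Ne.symm hku) (Ne.symm hkv) _
          (fun t h1 h2 h3 => by rw [hwz t h1 h2 h3]; ring)]
        rw [hwu, hwv, hwk]
        nlinarith
      have inner_sum : ∀ a : Fin n,
          (∑ t, B a t * w t) = B a u * 2 + B a v * s + B a k * 1 := by
        intro a
        rw [triple_sum u v k huv (Ne.symm hku) (Ne.symm hkv) (fun t => B a t * w t)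
          (fun t h1 h2 h3 => by show B a t * w t = 0; rw [hwz t h1 h2 h3]; ring)]
        rw [hwu, hwv, hwk]
      have hQval : (∑ t, (∑ t', B t t' * w t') * w t) =
          (B u u * 2 + B u v * s + B u k * 1) * 2 +
          (B v u * 2 + B v v * s + B v k * 1) * s +
          (B k u * 2 + B k v * s + B k k * 1) * 1 := by
        rw [triple_sum u v k huv (Ne.symm hku) (Ne.symm hkv) _
          (fun t h1 h2 h3 => by rw [hwz t h1 h2 h3]; ring)]
        rw [inner_sum u, inner_sum v, inner_sum k, hwu, hwv, hwk]
      refine key w hw0 (by rw [hNval]; norm_num) ?_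
      rw [hNval, hQval]
      have huu0 : B u u = 0 := by rw [hBapp, hdiag]; norm_num
      have hvv0 : B v v = 0 := by rw [hBapp, hdiag]; norm_num
      have hkk0 : B k k = 0 := by rw [hBapp, hdiag]; norm_num
      have hvu : B v u = B u v := by rw [hBapp, hBapp, hsymN]
      have hku' : B k u = B u k := by rw [hBapp, hBapp, hsymN]
      have hkv' : B k v = B v k := by rw [hBapp, hBapp, hsymN]
      have h1 : (2:ℝ) ≤ B u v := by rw [hBapp]; exact_mod_cast huv2
      have h2 : (1:ℝ) ≤ B v k := by rw [hBapp]; exact_mod_cast hvk1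
      have h4 : (0:ℝ) ≤ B u k := by rw [hBapp]; positivity
      rw [huu0, hvv0, hkk0, hvu, hku', hkv']
      nlinarith [mul_le_mul_of_nonneg_right h1 hs0, mul_le_mul_of_nonneg_right h2 hs0]
    · -- no pendant edge: the graph is a single multiple edge, spectral radius ≤ 2
      push_neg at hk
      have hedge : ∀ k : Fin n, k ≠ i → k ≠ j → A i k = 0 ∧ A j k = 0 := by
        intro k h1 h2
        have := hk k ⟨h1, h2⟩
        omega
      have hall : ∀ k : Fin n, k = i ∨ k = j := by
        intro k
        by_contra hc
        push_neg at hc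
        have hzero : ∀ m : ℕ, ∀ l : Fin n, l ≠ i → l ≠ j → (A ^ m) i l = 0 := by
          intro m
          induction m with
          | zero =>
            intro l h1 h2
            rw [pow_zero]
            exact Matrix.one_apply_ne (Ne.symm h1)
          | succ m ih =>
            intro l h1 h2
            rw [pow_succ, Matrix.mul_apply]
            apply Finset.sum_eq_zero
            intro t _
            by_cases hti : t = i
            · subst hti; rw [(hedge l h1 h2).1, mul_zero]
            · by_cases htj : t = j
              · subst htj; rw [(hedge l h1 h2).2, mul_zero]
              · rw [ih t hti htj, zero_mul]
        obtain ⟨m, hm⟩ := hirr i k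
        exact hm (hzero m k hc.1 hc.2)
      have hrow : ∀ k : Fin n, (∑ t ∈ Finset.univ.erase k, (A k t : ℝ)) ≤ 2 := by
        intro k
        rcases hall k with rfl | rfl
        · rw [Finset.sum_eq_single_of_mem j
            (Finset.mem_erase.mpr ⟨Ne.symm hij', Finset.mem_univ j⟩)
            (fun t ht htj => by
              have hti := (Finset.mem_erase.mp ht).1
              have := (hedge t hti htj).1
              simp [this])]
          have h5 : A k j ≤ 2 := by have := h3 k j; omega
          exact_mod_cast h5
        · rw [Finset.sum_eq_single_of_mem i
            (Finset.mem_erase.mpr ⟨hij', Finset.mem_univ i⟩)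
            (fun t ht hti => by
              have htj := (Finset.mem_erase.mp ht).1
              have := (hedge t hti htj).2
              simp [this])]
          have h5 : A k i ≤ 2 := by have := h3 k i; omega
          exact_mod_cast h5
      have hub : specRad B ≤ 2 := by
        apply aux_specRad_le B 2 (by norm_num)
        intro z hz
        have hz' : ((B.map (algebraMap ℝ ℂ)).charpoly).IsRoot z := by
          rw [Matrix.charpoly_map]; exact hz
        obtain ⟨v, hv0, hmv⟩ := (aux_charpoly_isRoot_iff _ z).mp hz'
        have heig : Module.End.HasEigenvalue (Matrix.toLin' (B.map (algebraMap ℝ ℂ))) z :=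
          Module.End.hasEigenvalue_of_hasEigenvector
            ⟨Module.End.mem_eigenspace_iff.mpr (by rw [Matrix.toLin'_apply, hmv]), hv0⟩
        obtain ⟨k, hball⟩ := eigenvalue_mem_ball heig
        have hdiagC : (B.map (algebraMap ℝ ℂ)) k k = 0 := by
          simp [Matrix.map_apply, hBapp, hdiag]
        rw [hdiagC, Metric.mem_closedBall, dist_zero_right] at hball
        have hsum : (∑ t ∈ Finset.univ.erase k, ‖(B.map (algebraMap ℝ ℂ)) k t‖) =
            ∑ t ∈ Finset.univ.erase k, (A k t : ℝ) := by
          apply Finset.sum_congr rfl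
          intro t _
          simp [Matrix.map_apply, hBapp, Complex.norm_real,
            abs_of_nonneg (by positivity : (0:ℝ) ≤ (A k t : ℝ))]
        calc ‖z‖ ≤ ∑ t ∈ Finset.univ.erase k, ‖(B.map (algebraMap ℝ ℂ)) k t‖ := hball
          _ = ∑ t ∈ Finset.univ.erase k, (A k t : ℝ) := hsum
          _ ≤ 2 := hrow k
      linarith
end

section
/- Let q ≥ 2 be an integer and set μ = 2·cos(π/(2q)). Then the matrix C = γ₁(μ)·γ₂(μ) = !![1 - μ², μ; -μ, 1] has order exactly q in PSL(2, ℝ): C^q = I or C^q = -I, and for every integer n with 0 < n < q, C^n ∉ {I, -I}. -/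
open Matrix
open scoped MatrixGroups

private lemma sin_rec_aux (x y : ℝ) :
    Real.sin (x + y) = 2 * Real.cos y * Real.sin x - Real.sin (x - y) := by
  rw [Real.sin_add, Real.sin_sub]; ring

/-- Chebyshev-type recursion for powers of the matrix `!![1-μ², μ; -μ, 1]`. -/
private lemma cheb (μ a : ℝ) (htr : 2 - μ ^ 2 = 2 * Real.cos a) : ∀ n : ℕ,
    Real.sin a • (!![1 - μ ^ 2, μ; -μ, 1] : Matrix (Fin 2) (Fin 2) ℝ) ^ (n + 1)
      = Real.sin (((n : ℝ) + 1) * a) • !![1 - μ ^ 2, μ; -μ, 1]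
        - Real.sin ((n : ℝ) * a) • (1 : Matrix (Fin 2) (Fin 2) ℝ) := by
  have hCH : (!![1 - μ ^ 2, μ; -μ, 1] : Matrix (Fin 2) (Fin 2) ℝ) * !![1 - μ ^ 2, μ; -μ, 1]
      = (2 * Real.cos a) • !![1 - μ ^ 2, μ; -μ, 1] - 1 := by
    rw [← htr]
    ext i j
    fin_cases i <;> fin_cases j <;>
      simp [Matrix.mul_apply, Fin.sum_univ_two, Matrix.one_apply] <;> ring
  intro n
  induction n with
  | zero => simp
  | succ m ih =>
    have hrec : Real.sin ((((m : ℕ) : ℝ) + 1 + 1) * a)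
        = 2 * Real.cos a * Real.sin (((m : ℝ) + 1) * a) - Real.sin ((m : ℝ) * a) := by
      have e1 : ((m : ℝ) + 1 + 1) * a = ((m : ℝ) + 1) * a + a := by ring
      have e2 : ((m : ℝ) + 1) * a - a = (m : ℝ) * a := by ring
      rw [e1, sin_rec_aux, e2]
    have hstep : Real.sin a • (!![1 - μ ^ 2, μ; -μ, 1] : Matrix (Fin 2) (Fin 2) ℝ) ^ (m + 1 + 1)
        = (Real.sin a • (!![1 - μ ^ 2, μ; -μ, 1] : Matrix (Fin 2) (Fin 2) ℝ) ^ (m + 1))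
          * !![1 - μ ^ 2, μ; -μ, 1] := by
      rw [pow_succ, smul_mul_assoc]
    rw [hstep, ih, sub_mul, smul_mul_assoc, smul_mul_assoc, hCH, one_mul]
    push_cast
    rw [hrec]
    ext i j
    simp only [Matrix.sub_apply, Matrix.smul_apply, Matrix.add_apply, smul_eq_mul,
      Matrix.one_apply]
    split <;> ring

/-- Let `q ≥ 2` be an integer and `μ = 2·cos(π/(2q))`. Then
`C = γ₁(μ)·γ₂(μ) = !![1 - μ², μ; -μ, 1]` has order exactly `q` in
`PSL(2, ℝ) = SL(2, ℝ)/{±I}`: `C^q = I` or `C^q = -I`, and for every integer `n` with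
`0 < n < q`, `C^n ∉ {I, -I}`. -/
theorem stmt17 (q : ℕ) (hq : 2 ≤ q) (μ : ℝ) (hμ : μ = 2 * Real.cos (Real.pi / (2 * q))) :
    ((gamma1 μ * gamma2 μ : SL(2, ℝ)) : Matrix (Fin 2) (Fin 2) ℝ) = !![1 - μ ^ 2, μ; -μ, 1] ∧
    ((((gamma1 μ * gamma2 μ) ^ q : SL(2, ℝ)) : Matrix (Fin 2) (Fin 2) ℝ) = 1 ∨
      (((gamma1 μ * gamma2 μ) ^ q : SL(2, ℝ)) : Matrix (Fin 2) (Fin 2) ℝ) = -1) ∧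
    ∀ n : ℕ, 0 < n → n < q →
      (((gamma1 μ * gamma2 μ) ^ n : SL(2, ℝ)) : Matrix (Fin 2) (Fin 2) ℝ) ≠ 1 ∧
      (((gamma1 μ * gamma2 μ) ^ n : SL(2, ℝ)) : Matrix (Fin 2) (Fin 2) ℝ) ≠ -1 := by
  have hq0 : (0:ℝ) < q := by positivity
  have h2q : (2:ℝ) ≤ q := by exact_mod_cast hq
  have hpi := Real.pi_pos
  have hC : ((gamma1 μ * gamma2 μ : SL(2, ℝ)) : Matrix (Fin 2) (Fin 2) ℝ)
      = !![1 - μ ^ 2, μ; -μ, 1] := by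
    rw [Matrix.SpecialLinearGroup.coe_mul]; simp only [gamma1, gamma2]
    ext i j
    fin_cases i <;> fin_cases j <;> simp [Matrix.mul_apply, Fin.sum_univ_two] <;> ring
  have hcoe : ∀ n : ℕ, (((gamma1 μ * gamma2 μ) ^ n : SL(2, ℝ)) : Matrix (Fin 2) (Fin 2) ℝ)
      = (!![1 - μ ^ 2, μ; -μ, 1] : Matrix (Fin 2) (Fin 2) ℝ) ^ n := by
    intro n
    rw [← hC]
    exact Matrix.SpecialLinearGroup.coe_pow _ n
  obtain ⟨a, ha⟩ : ∃ a : ℝ, a = Real.pi - Real.pi / q := ⟨_, rfl⟩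
  have hpiq_pos : 0 < Real.pi / q := by positivity
  have hpiq_lt : Real.pi / q < Real.pi := by
    rw [div_lt_iff₀ hq0]; nlinarith
  have hsina_pos : 0 < Real.sin a := by
    rw [ha, Real.sin_pi_sub]
    exact Real.sin_pos_of_pos_of_lt_pi hpiq_pos hpiq_lt
  have hsina_ne : Real.sin a ≠ 0 := ne_of_gt hsina_pos
  have hμ_ne : μ ≠ 0 := by
    rw [hμ]
    have h1 : 0 < Real.cos (Real.pi / (2 * q)) := by
      apply Real.cos_pos_of_mem_Ioo
      constructor
      · have : (0:ℝ) < Real.pi / (2 * q) := by positivity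
        linarith
      · rw [div_lt_iff₀ (by positivity)]; nlinarith
    positivity
  have htr : 2 - μ ^ 2 = 2 * Real.cos a := by
    have h2 : Real.cos (Real.pi / (2 * q)) ^ 2
        = 1 / 2 + Real.cos (2 * (Real.pi / (2 * q))) / 2 := Real.cos_sq _
    have h3 : 2 * (Real.pi / (2 * q)) = Real.pi / q := by field_simp
    rw [ha, Real.cos_pi_sub, hμ]
    rw [h3] at h2
    nlinarith
  have key := cheb μ a htr
  -- sin(n*a) for n < q
  have hsin_na : ∀ n : ℕ, 0 < n → n < q → Real.sin ((n : ℝ) * a) ≠ 0 := by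
    intro n hn hnq
    have e : (n : ℝ) * a = (n : ℝ) * Real.pi - (n : ℝ) * (Real.pi / q) := by
      rw [ha]; ring
    rw [e, Real.sin_nat_mul_pi_sub]
    have hpos : 0 < Real.sin ((n : ℝ) * (Real.pi / q)) := by
      apply Real.sin_pos_of_pos_of_lt_pi
      · have : (0:ℝ) < n := by exact_mod_cast hn
        positivity
      · have hnq' : (n : ℝ) < q := by exact_mod_cast hnq
        rw [mul_div_assoc'] at *
        rw [div_lt_iff₀ hq0]
        nlinarith
    intro h
    rcases Nat.even_or_odd n with he | ho
    · rw [he.neg_one_pow] at h; simp at h; linarith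
    · rw [ho.neg_one_pow] at h; simp at h; linarith
  refine ⟨hC, ?_, ?_⟩
  · -- C^q = ±1
    have hq1 : q - 1 + 1 = q := by omega
    have hcast : ((q - 1 : ℕ) : ℝ) = (q : ℝ) - 1 := by
      push_cast [Nat.cast_sub (by omega : 1 ≤ q)]; ring
    have hqa : Real.sin ((((q - 1 : ℕ) : ℝ) + 1) * a) = 0 := by
      have e : (((q - 1 : ℕ) : ℝ) + 1) * a = ((q : ℤ) - 1 : ℤ) * Real.pi := by
        rw [hcast, ha]
        have : (q : ℝ) * (Real.pi / q) = Real.pi := by field_simp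
        push_cast
        nlinarith [this]
      rw [e, Real.sin_int_mul_pi]
    have h1 : Real.sin a • (!![1 - μ ^ 2, μ; -μ, 1] : Matrix (Fin 2) (Fin 2) ℝ) ^ q
        = (- Real.sin (((q - 1 : ℕ) : ℝ) * a)) • (1 : Matrix (Fin 2) (Fin 2) ℝ) := by
      rw [← hq1, key (q - 1), hqa]
      simp
    set k : ℝ := (- Real.sin (((q - 1 : ℕ) : ℝ) * a)) / Real.sin a with hk
    have h2 : (!![1 - μ ^ 2, μ; -μ, 1] : Matrix (Fin 2) (Fin 2) ℝ) ^ q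
        = k • (1 : Matrix (Fin 2) (Fin 2) ℝ) := by
      have := congrArg (fun M => (Real.sin a)⁻¹ • M) h1
      simpa [smul_smul, inv_mul_cancel₀ hsina_ne, hk, div_eq_inv_mul, mul_comm] using this
    have hdet : (!![1 - μ ^ 2, μ; -μ, 1] : Matrix (Fin 2) (Fin 2) ℝ).det = 1 := by
      rw [Matrix.det_fin_two_of]; ring
    have hk2 : k * k = 1 := by
      have hd : ((!![1 - μ ^ 2, μ; -μ, 1] : Matrix (Fin 2) (Fin 2) ℝ) ^ q).det = 1 := by
        rw [Matrix.det_pow, hdet, one_pow]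
      rw [h2, Matrix.det_smul, Matrix.det_one] at hd
      simp only [Fintype.card_fin, mul_one] at hd
      nlinarith [hd]
    rw [hcoe, h2]
    rcases mul_self_eq_one_iff.mp hk2 with h | h
    · left; rw [h, one_smul]
    · right; rw [h]; simp
  · -- 0 < n < q
    intro n hn hnq
    obtain ⟨m, rfl⟩ : ∃ m, n = m + 1 := ⟨n - 1, by omega⟩
    have hsn : Real.sin (((m : ℝ) + 1) * a) ≠ 0 := by
      have := hsin_na (m + 1) hn hnq
      push_cast at this
      exact this
    have hoff : ((!![1 - μ ^ 2, μ; -μ, 1] : Matrix (Fin 2) (Fin 2) ℝ) ^ (m + 1)) 0 1 ≠ 0 := by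
      intro h
      have h01 := congrArg (fun M => M 0 1) (key m)
      simp only [Matrix.smul_apply, Matrix.sub_apply, Matrix.one_apply, smul_eq_mul] at h01
      rw [h] at h01
      simp at h01
      rcases h01 with h1 | h1
      · exact hsn h1
      · exact hμ_ne h1
    constructor
    · rw [hcoe]; intro h
      apply hoff; rw [h]; simp [Matrix.one_apply]
    · rw [hcoe]; intro h
      apply hoff; rw [h]; simp [Matrix.one_apply]
end

section
/- Let Q be a free group of rank 2 and suppose Q is a subgroup of a finite direct product G₁ × ⋯ × G_k such that, for each r, the restriction to Q of the projection π_r : G₁ × ⋯ × G_k → G_r is surjective. Then for some r the restriction of π_r to Q is an isomorphism onto G_r; in particular some G_r is a free group of rank 2. -/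
open Subgroup

private lemma freeGroup_pow_of_subsingleton {ι : Type*} [Subsingleton ι] (a : ι)
    (g : FreeGroup ι) : ∃ n : ℤ, g = FreeGroup.of a ^ n := by
  induction g using FreeGroup.induction_on with
  | C1 => exact ⟨0, by simp⟩
  | of x => exact ⟨1, by rw [Subsingleton.elim a x, zpow_one]⟩
  | inv_of x ih =>
      obtain ⟨n, hn⟩ := ih
      exact ⟨-n, by rw [hn, zpow_neg]⟩
  | mul x y ihx ihy =>
      obtain ⟨m, hm⟩ := ihx
      obtain ⟨n, hn⟩ := ihy
      exact ⟨m + n, by rw [hm, hn, zpow_add]⟩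

private lemma freeGroup_of_not_commute {ι : Type*} {a b : ι} (h : a ≠ b) :
    ¬ Commute (FreeGroup.of a) (FreeGroup.of b) := by
  intro hc
  classical
  let f : ι → Equiv.Perm (Fin 3) := fun i => if i = a then Equiv.swap 0 1 else Equiv.swap 1 2
  have hc' := congrArg (FreeGroup.lift f) hc.eq
  simp only [map_mul, FreeGroup.lift_apply_of] at hc'
  have hfa : f a = Equiv.swap 0 1 := if_pos rfl
  have hfb : f b = Equiv.swap 1 2 := if_neg (Ne.symm h)
  rw [hfa, hfb] at hc'
  have : ¬ (Equiv.swap (0 : Fin 3) 1 * Equiv.swap 1 2 = Equiv.swap 1 2 * Equiv.swap 0 1) := by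
    decide
  exact this hc'

private lemma freeGroup_zpow_ne_one {ι : Type*} (a : ι) {n : ℤ} (hn : n ≠ 0) :
    FreeGroup.of a ^ n ≠ (1 : FreeGroup ι) := by
  intro hone
  let F : FreeGroup ι →* Multiplicative ℤ := FreeGroup.lift (fun _ : ι => Multiplicative.ofAdd (1 : ℤ))
  have : F (FreeGroup.of a ^ n) = F 1 := congrArg F hone
  rw [map_zpow, map_one] at this
  have hFa : F (FreeGroup.of a) = Multiplicative.ofAdd (1 : ℤ) := FreeGroup.lift_apply_of
  rw [hFa] at this
  have h2 : (Multiplicative.ofAdd (1:ℤ) ^ n).toAdd = (1 : Multiplicative ℤ).toAdd :=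
    congrArg Multiplicative.toAdd this
  rw [toAdd_zpow, toAdd_ofAdd, toAdd_one, smul_eq_mul, mul_one] at h2
  exact hn h2

/-- Two nontrivial elements of a free group have a common nontrivial power (up to exponents),
in the sense that if they commute then `x ^ n = y ^ m ≠ 1` for suitable nonzero `n m`. -/
private lemma exists_common_zpow {F : Type} [Group F] [IsFreeGroup F] {x y : F}
    (hx : x ≠ 1) (hy : y ≠ 1) (hc : Commute x y) :
    ∃ m n : ℤ, x ^ n = y ^ m ∧ x ^ n ≠ 1 := by
  set H : Subgroup F := Subgroup.closure {x, y} with hH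
  have hxH : x ∈ H := Subgroup.subset_closure (by simp)
  have hyH : y ∈ H := Subgroup.subset_closure (by simp)
  have hcomm : ∀ u v : F, u ∈ H → v ∈ H → u * v = v * u := by
    intro u v hu hv
    refine Subgroup.closure_induction₂ (k := ({x, y} : Set F))
      (p := fun u v _ _ => u * v = v * u) ?_ ?_ ?_ ?_ ?_ ?_ ?_ hu hv
    · rintro u v (rfl | rfl) (rfl | rfl)
      · rfl
      · exact hc.eq
      · exact hc.symm.eq
      · rfl
    · intro u _; rw [one_mul, mul_one]
    · intro u _; rw [one_mul, mul_one]
    · intro u v w _ _ _ h1 h2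
      rw [mul_assoc, h2, ← mul_assoc, h1, mul_assoc]
    · intro u v w _ _ _ h1 h2
      rw [← mul_assoc, h1, mul_assoc, h2, ← mul_assoc]
    · intro u v _ _ h1
      exact ((show Commute u v from h1).inv_left).eq
    · intro u v _ _ h1
      exact ((show Commute u v from h1).inv_right).eq
  haveI : IsFreeGroup ↥H := inferInstance
  set ι := IsFreeGroup.Generators ↥H
  let e : ↥H ≃* FreeGroup ι := IsFreeGroup.toFreeGroup (G := ↥H)
  haveI : Subsingleton ι := by
    by_contra hsub
    rw [not_subsingleton_iff_nontrivial] at hsub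
    obtain ⟨a, b, hab⟩ := hsub
    refine freeGroup_of_not_commute hab ?_
    have h1 : (e.symm (FreeGroup.of a) : F) * (e.symm (FreeGroup.of b) : F)
        = (e.symm (FreeGroup.of b) : F) * (e.symm (FreeGroup.of a) : F) :=
      hcomm _ _ (e.symm (FreeGroup.of a)).2 (e.symm (FreeGroup.of b)).2
    have h2 : e.symm (FreeGroup.of a) * e.symm (FreeGroup.of b)
        = e.symm (FreeGroup.of b) * e.symm (FreeGroup.of a) := Subtype.ext h1
    have h3 := congrArg e h2
    exact (by simpa [map_mul] using h3 : FreeGroup.of a * FreeGroup.of b = FreeGroup.of b * FreeGroup.of a)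
  set x' : ↥H := ⟨x, hxH⟩
  set y' : ↥H := ⟨y, hyH⟩
  have hx' : x' ≠ 1 := fun h => hx (congrArg Subtype.val h)
  have hy' : y' ≠ 1 := fun h => hy (congrArg Subtype.val h)
  have hu : e x' ≠ 1 := fun h => hx' (e.injective (by simpa using h))
  -- get the unique generator
  have hne : Nonempty ι := by
    by_contra hempty
    rw [not_nonempty_iff] at hempty
    apply hu
    induction (e x') using FreeGroup.induction_on with
    | C1 => rfl
    | of z => exact hempty.elim z
    | inv_of z ih => exact hempty.elim z
    | mul z w ihz ihw => rw [ihz, ihw, one_mul]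
  obtain ⟨a⟩ := hne
  obtain ⟨m, hm⟩ := freeGroup_pow_of_subsingleton a (e x')
  obtain ⟨n, hn⟩ := freeGroup_pow_of_subsingleton a (e y')
  have hm0 : m ≠ 0 := by rintro rfl; exact hu (by simpa using hm)
  have hn0 : n ≠ 0 := by
    rintro rfl
    exact hy' (e.injective (by simpa using hn))
  refine ⟨m, n, ?_, ?_⟩
  · have : e (x' ^ n) = e (y' ^ m) := by
      rw [map_zpow, map_zpow, hm, hn, ← zpow_mul, ← zpow_mul, mul_comm]
    have h2 := e.injective this
    have h3 := congrArg (Subtype.val) h2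
    simpa using h3
  · intro hone
    have : e (x' ^ n) = 1 := by
      have : x' ^ n = 1 := Subtype.ext (by simpa using hone)
      rw [this, map_one]
    rw [map_zpow, hm, ← zpow_mul] at this
    exact freeGroup_zpow_ne_one a (mul_ne_zero hm0 hn0) this

/-- Key: nontrivial normal subgroups of a free group intersect nontrivially. -/
private lemma inf_ne_bot_of_normal (N M : Subgroup (FreeGroup (Fin 2)))
    (hN : N.Normal) (hM : M.Normal) (hNbot : N ≠ ⊥) (hMbot : M ≠ ⊥) : N ⊓ M ≠ ⊥ := by
  rw [Subgroup.ne_bot_iff_exists_ne_one] at hNbot hMbot ⊢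
  obtain ⟨⟨x, hxN⟩, hx1⟩ := hNbot
  obtain ⟨⟨y, hyM⟩, hy1⟩ := hMbot
  have hx : x ≠ 1 := fun h => hx1 (Subtype.ext h)
  have hy : y ≠ 1 := fun h => hy1 (Subtype.ext h)
  by_cases hc : Commute x y
  · obtain ⟨m, n, heq, hne⟩ := exists_common_zpow hx hy hc
    have h1 : x ^ n ∈ N := Subgroup.zpow_mem N hxN n
    have h2 : x ^ n ∈ M := heq ▸ Subgroup.zpow_mem M hyM m
    exact ⟨⟨x ^ n, h1, h2⟩, fun h => hne (congrArg Subtype.val h)⟩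
  · set c := x * (y * x⁻¹ * y⁻¹) with hcdef
    have hcN : c ∈ N := mul_mem hxN (hN.conj_mem _ (inv_mem hxN) y)
    have hcM : c ∈ M := by
      have : c = (x * y * x⁻¹) * y⁻¹ := by rw [hcdef]; group
      rw [this]
      exact mul_mem (hM.conj_mem _ hyM x) (inv_mem hyM)
    have hc1 : c ≠ 1 := by
      intro h
      apply hc
      have : x * y = y * x := by
        have := congrArg (· * (y * x)) h
        simp only [one_mul] at this
        rw [← this, hcdef]
        group
      exact this
    exact ⟨⟨c, hcN, hcM⟩, fun h => hc1 (congrArg Subtype.val h)⟩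

private lemma exists_eq_bot {k : ℕ} (N : Fin k → Subgroup (FreeGroup (Fin 2)))
    (hnorm : ∀ r, (N r).Normal) (hinf : (⨅ r, N r) = ⊥) : ∃ r, N r = ⊥ := by
  by_contra h
  push_neg at h
  have key : ∀ s : Finset (Fin k), (⨅ r ∈ s, N r) ≠ ⊥ ∧ (⨅ r ∈ s, N r).Normal := by
    intro s
    induction s using Finset.induction_on with
    | empty =>
        simp only [Finset.notMem_empty, iInf_false, iInf_top]
        constructor
        · intro hb
          have h2 : FreeGroup.of (0 : Fin 2) ∈ (⊤ : Subgroup (FreeGroup (Fin 2))) :=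
            Subgroup.mem_top _
          rw [hb, Subgroup.mem_bot] at h2
          exact freeGroup_zpow_ne_one (0 : Fin 2) (one_ne_zero) (by rw [zpow_one]; exact h2)
        · infer_instance
    | @insert a s ha ih =>
        rw [Finset.iInf_insert]
        haveI := ih.2
        haveI := hnorm a
        refine ⟨inf_ne_bot_of_normal _ _ (hnorm a) ih.2 (h a) ih.1, inferInstance⟩
  have huniv : (⨅ r ∈ Finset.univ, N r) = ⨅ r, N r := by simp
  exact (key Finset.univ).1 (huniv.trans hinf)

/-- Let `Q` be a free group of rank 2 realized as a subgroup of a finite direct product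
`G₁ × ⋯ × G_k` such that, for each `r`, the restriction to `Q` of the projection
`π_r : G₁ × ⋯ × G_k → G_r` is surjective. Then for some `r` the restriction of `π_r` to
`Q` is an isomorphism onto `G_r`; in particular some `G_r` is a free group of rank 2. -/
theorem stmt18 {k : ℕ} (G : Fin k → Type*) [∀ r, Group (G r)]
    (Q : Subgroup (∀ r, G r))
    (hfree : Nonempty (FreeGroup (Fin 2) ≃* Q))
    (hsurj : ∀ r : Fin k, Function.Surjective (fun q : Q => (q : ∀ i, G i) r)) :
    ∃ r : Fin k, Function.Bijective (fun q : Q => (q : ∀ i, G i) r) ∧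
      Nonempty (FreeGroup (Fin 2) ≃* G r) := by
  obtain ⟨e⟩ := hfree
  set π : ∀ r : Fin k, Q →* G r := fun r => (Pi.evalMonoidHom G r).comp Q.subtype with hπ
  set N : Fin k → Subgroup (FreeGroup (Fin 2)) :=
    fun r => (π r).ker.comap e.toMonoidHom with hN
  have hnorm : ∀ r, (N r).Normal := fun r => Subgroup.Normal.comap (MonoidHom.normal_ker (π r)) _
  have hinf : (⨅ r, N r) = ⊥ := by
    rw [eq_bot_iff]
    intro g hg
    simp only [hN, Subgroup.mem_iInf, Subgroup.mem_comap, MonoidHom.mem_ker] at hg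
    have : e g = 1 := by
      apply Subtype.ext
      funext r
      exact hg r
    rw [Subgroup.mem_bot]
    exact e.injective (by rw [this, map_one])
  obtain ⟨r, hr⟩ := exists_eq_bot N hnorm hinf
  have hker : (π r).ker = ⊥ := by
    rw [eq_bot_iff]
    intro q hq
    have : e.symm q ∈ N r := by
      simp only [hN, Subgroup.mem_comap]
      simpa using hq
    rw [hr, Subgroup.mem_bot] at this
    rw [Subgroup.mem_bot]
    have := congrArg e this
    simpa using this
  have hinj : Function.Injective (π r) := (MonoidHom.ker_eq_bot_iff (π r)).1 hker
  have hbij : Function.Bijective (fun q : Q => (q : ∀ i, G i) r) := ⟨hinj, hsurj r⟩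
  exact ⟨r, hbij, ⟨e.trans (MulEquiv.ofBijective (π r) hbij)⟩⟩
end
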